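/- arXiv:2507.09991 — 13 statements merged into one kernel-verified Lean document; each statement's English description precedes it below -/
import Mathlib

section
/- Let f(x) = (x^2 + b_1 x + c_1)(x^2 + b_2 x + c_2) be a square-free quartic polynomial over F_q. Set Δ_1 = b_1^2 - 4c_1, Δ_2 = b_2^2 - 4c_2, and B = 4(c_1 + c_2) - 2 b_1 b_2. Then ∑_{x ∈ F_q} σ(f(x)) = -1 + ∑_{x ∈ F_q} σ(x^3 + B x^2 + Δ_1 Δ_2 x). -/
open Polynomial Finset

private lemma card_quad {F : Type*} [Field F] [Fintype F] [DecidableEq F]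
    (h2 : ringChar F ≠ 2) {a : F} (ha : a ≠ 0) (b c : F) :
    ((univ.filter (fun x : F => a * x ^ 2 + b * x + c = 0)).card : ℤ)
      = 1 + quadraticChar F (b ^ 2 - 4 * (a * c)) := by
  have h2' : (2 : F) ≠ 0 := Ring.two_ne_zero h2
  have key : (univ.filter (fun x : F => a * x ^ 2 + b * x + c = 0)).card
      = ({x : F | x ^ 2 = b ^ 2 - 4 * (a * c)}.toFinset).card := by
    apply Finset.card_bij' (fun x _ => 2 * a * x + b)
      (fun y _ => (y - b) / (2 * a))
    · intro x hx
      rw [Set.mem_toFinset, Set.mem_setOf_eq]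
      rw [mem_filter] at hx
      linear_combination 4 * a * hx.2
    · intro y hy
      rw [Set.mem_toFinset, Set.mem_setOf_eq] at hy
      rw [mem_filter]
      refine ⟨mem_univ _, ?_⟩
      field_simp
      linear_combination hy
    · intro x hx; field_simp; ring
    · intro y hy; field_simp; ring
  rw [key, quadraticChar_card_sqrts h2]
  ring

private lemma sf_facts {F : Type*} [Field F] (h2 : ringChar F ≠ 2) (b₁ c₁ b₂ c₂ : F)
    (hsf : Squarefree ((X ^ 2 + C b₁ * X + C c₁) * (X ^ 2 + C b₂ * X + C c₂) : F[X])) :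
    (∀ x : F, x ^ 2 + b₁ * x + c₁ = 0 → x ^ 2 + b₂ * x + c₂ ≠ 0) ∧
      (b₁ ^ 2 - 4 * c₁ ≠ 0) ∧ (b₂ ^ 2 - 4 * c₂ ≠ 0) ∧ ¬(b₁ = b₂ ∧ c₁ = c₂) := by
  have h2' : (2 : F) ≠ 0 := Ring.two_ne_zero h2
  have key : ∀ b c : F, b ^ 2 - 4 * c = 0 →
      (X ^ 2 + C b * X + C c : F[X]) = (X - C (-(b / 2))) ^ 2 := by
    intro b c h
    set r : F := -(b / 2) with hr
    have e1 : b = -(2 * r) := by rw [hr]; field_simp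
    have e2 : c = r ^ 2 := by rw [hr]; field_simp; linear_combination -h
    have hcb : (C b : F[X]) = -(2 * C r) := by rw [e1, map_neg, map_mul, map_ofNat]
    have hcc : (C c : F[X]) = C r ^ 2 := by rw [e2, map_pow]
    rw [hcb, hcc]; ring
  refine ⟨?_, ?_, ?_, ?_⟩
  · intro x h1x h2x
    have d1 : (X - C x) ∣ (X ^ 2 + C b₁ * X + C c₁ : F[X]) := by
      rw [dvd_iff_isRoot]; simp [IsRoot, h1x]
    have d2 : (X - C x) ∣ (X ^ 2 + C b₂ * X + C c₂ : F[X]) := by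
      rw [dvd_iff_isRoot]; simp [IsRoot, h2x]
    exact not_isUnit_X_sub_C x (hsf _ (mul_dvd_mul d1 d2))
  · intro h
    have := key b₁ c₁ h
    refine not_isUnit_X_sub_C (-(b₁ / 2)) (hsf _ ?_)
    rw [← sq]
    exact Dvd.dvd.mul_right (this ▸ dvd_refl _) _
  · intro h
    have := key b₂ c₂ h
    refine not_isUnit_X_sub_C (-(b₂ / 2)) (hsf _ ?_)
    rw [← sq]
    exact Dvd.dvd.mul_left (this ▸ dvd_refl _) _
  · rintro ⟨hb, hc⟩
    subst hb; subst hc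
    have hu := hsf _ (dvd_refl _)
    rw [isUnit_iff_degree_eq_zero] at hu
    have : (X ^ 2 + C b₁ * X + C c₁ : F[X]).natDegree = 2 := by
      have := Polynomial.natDegree_quadratic (a := (1:F)) (b := b₁) (c := c₁) one_ne_zero
      simpa using this
    rw [degree_eq_natDegree (fun h0 => by simp [h0] at this), this] at hu
    exact two_ne_zero (by exact_mod_cast hu)

theorem quartic_product_descent {F : Type*} [Field F] [Fintype F] [DecidableEq F]
    (h2 : ringChar F ≠ 2) (h3 : ringChar F ≠ 3) (b₁ c₁ b₂ c₂ : F)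
    (hsf : Squarefree ((X ^ 2 + C b₁ * X + C c₁) * (X ^ 2 + C b₂ * X + C c₂) : F[X])) :
    ∑ x : F, quadraticChar F ((x ^ 2 + b₁ * x + c₁) * (x ^ 2 + b₂ * x + c₂)) =
      -1 + ∑ x : F, quadraticChar F
        (x ^ 3 + (4 * (c₁ + c₂) - 2 * b₁ * b₂) * x ^ 2 +
          (b₁ ^ 2 - 4 * c₁) * (b₂ ^ 2 - 4 * c₂) * x) := by
  obtain ⟨hcop, hΔ₁, hΔ₂, hne⟩ := sf_facts h2 b₁ c₁ b₂ c₂ hsf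
  have cq : ∀ {a : F}, a ≠ 0 → ∀ b c : F,
      ((univ.filter (fun x : F => a * x ^ 2 + b * x + c = 0)).card : ℤ)
        = 1 + quadraticChar F (b ^ 2 - 4 * (a * c)) := fun ha b c => card_quad h2 ha b c
  set χ := quadraticChar F with hχ
  set q1 : F → F := fun x => x ^ 2 + b₁ * x + c₁ with hq1
  set q2 : F → F := fun x => x ^ 2 + b₂ * x + c₂ with hq2
  set D : F → F := fun t => (b₂ - t * b₁) ^ 2 - 4 * ((1 - t) * (c₂ - t * c₁)) with hD
  -- Step A: expand each term as a sum over t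
  have stepA : ∀ x : F, χ (q1 x * q2 x) = ∑ t : F, if q2 x = t * q1 x then χ t else 0 := by
    intro x
    by_cases h : q1 x = 0
    · have h2x : q2 x ≠ 0 := hcop x h
      rw [h, zero_mul, MulChar.map_zero]
      refine (Finset.sum_eq_zero fun t _ => ?_).symm
      rw [if_neg]
      intro ht
      exact h2x (by simpa [h] using ht)
    · have hiff : ∀ t : F, (q2 x = t * q1 x) ↔ (t = q2 x / q1 x) := by
        intro t
        rw [eq_div_iff h, eq_comm]
      simp_rw [hiff]
      rw [Finset.sum_ite_eq' univ (q2 x / q1 x) χ, if_pos (mem_univ _)]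
      have he : q1 x * q2 x = (q2 x / q1 x) * (q1 x) ^ 2 := by field_simp
      rw [he, map_mul, map_pow, hχ, quadraticChar_sq_one h, mul_one]
  -- Step B/C: swap and count
  have stepBC : ∑ x : F, χ (q1 x * q2 x)
      = ∑ t : F, ((univ.filter (fun x : F => q2 x = t * q1 x)).card : ℤ) * χ t := by
    simp_rw [stepA]
    rw [Finset.sum_comm]
    refine Finset.sum_congr rfl fun t _ => ?_
    rw [← Finset.sum_filter, Finset.sum_const, nsmul_eq_mul]
  rw [stepBC]
  -- Step D: evaluate each t-term
  have stepD : ∀ t : F, ((univ.filter (fun x : F => q2 x = t * q1 x)).card : ℤ) * χ t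
      = χ (t * D t) + (if t = 1 then 0 else χ t) := by
    intro t
    by_cases ht : t = 1
    · subst ht
      rw [if_pos rfl, add_zero]
      have harg : (1 : F) * D 1 = (b₂ - b₁) ^ 2 := by simp only [hD]; ring
      rw [harg]
      by_cases hb : b₁ = b₂
      · have hc : c₁ ≠ c₂ := fun hc => hne ⟨hb, hc⟩
        have hemp : (univ.filter (fun x : F => q2 x = 1 * q1 x)) = ∅ := by
          refine Finset.filter_eq_empty_iff.mpr fun x _ => ?_
          simp only [hq1, hq2, one_mul]
          intro hx
          exact hc (by linear_combination -hx - x * hb)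
        have hz : (b₂ - b₁ : F) ^ 2 = 0 := by rw [hb]; ring
        rw [hemp, hz]
        simp [MulChar.map_zero]
      · have hb' : b₂ - b₁ ≠ 0 := sub_ne_zero.mpr (Ne.symm hb)
        have hone : (univ.filter (fun x : F => q2 x = 1 * q1 x)) = {(c₁ - c₂) / (b₂ - b₁)} := by
          ext x
          simp only [mem_filter, mem_univ, true_and, mem_singleton, hq1, hq2, one_mul]
          rw [eq_div_iff hb']
          constructor
          · intro h; linear_combination h
          · intro h; linear_combination h
        rw [hone, Finset.card_singleton, hχ, quadraticChar_sq_one' hb', map_one]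
        norm_num
    · rw [if_neg ht]
      have h1t : (1 : F) - t ≠ 0 := sub_ne_zero.mpr (Ne.symm ht)
      have hcard : (univ.filter (fun x : F => q2 x = t * q1 x))
          = (univ.filter (fun x : F =>
              (1 - t) * x ^ 2 + (b₂ - t * b₁) * x + (c₂ - t * c₁) = 0)) := by
        refine Finset.filter_congr fun x _ => ?_
        simp only [hq1, hq2]
        constructor
        · intro h; linear_combination h
        · intro h; linear_combination h
      rw [hcard, cq h1t]
      have harg : (b₂ - t * b₁) ^ 2 - 4 * ((1 - t) * (c₂ - t * c₁)) = D t := by simp [hD]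
      rw [harg, add_mul, one_mul, mul_comm (χ (D t)) (χ t), ← map_mul]
      exact add_comm _ _
  simp_rw [stepD]
  rw [Finset.sum_add_distrib]
  -- the ite-sum equals -1
  have h1 : (∑ t : F, if t = 1 then (0 : ℤ) else χ t) = -1 := by
    have he : (∑ t : F, if t = 1 then (0 : ℤ) else χ t)
        = (∑ t : F, χ t) - (∑ t : F, if t = 1 then χ t else 0) := by
      rw [← Finset.sum_sub_distrib]
      refine Finset.sum_congr rfl fun t _ => ?_
      by_cases h : t = 1 <;> simp [h]
    rw [he, hχ, quadraticChar_sum_zero h2, Finset.sum_ite_eq' univ (1 : F),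
      if_pos (mem_univ _), map_one]
    ring
  rw [h1]
  -- final substitution t ↦ Δ₁ * t
  have h2sum : (∑ t : F, χ (t * D t))
      = ∑ x : F, χ (x ^ 3 + (4 * (c₁ + c₂) - 2 * b₁ * b₂) * x ^ 2 +
          (b₁ ^ 2 - 4 * c₁) * (b₂ ^ 2 - 4 * c₂) * x) := by
    refine Fintype.sum_bijective (fun t : F => (b₁ ^ 2 - 4 * c₁) * t)
      (Equiv.mulLeft₀ _ hΔ₁).bijective _ _ fun t => ?_
    have harg : ((b₁ ^ 2 - 4 * c₁) * t) ^ 3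
          + (4 * (c₁ + c₂) - 2 * b₁ * b₂) * ((b₁ ^ 2 - 4 * c₁) * t) ^ 2
          + (b₁ ^ 2 - 4 * c₁) * (b₂ ^ 2 - 4 * c₂) * ((b₁ ^ 2 - 4 * c₁) * t)
        = (b₁ ^ 2 - 4 * c₁) ^ 2 * (t * D t) := by
      simp only [hD]; ring
    rw [harg]
    conv_rhs => rw [map_mul]
    rw [hχ, quadraticChar_sq_one' hΔ₁, one_mul]
  rw [h2sum, add_comm]
end

section
/- Let f(x) = x^4 + a_3 x^3 + a_2 x^2 + a_1 x + a_0 be a square-free quartic polynomial over F_q, and let g(x) = x^3 + a_2 x^2 + (a_1 a_3 - 4 a_0) x + a_0 (a_3^2 - 4 a_2) + a_1^2. Then ∑_{x ∈ F_q} σ(f(x)) = -1 + ∑_{x ∈ F_q} σ(g(x)). -/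
open Polynomial Finset

section Aux

variable {F : Type*} [Field F] [Fintype F] [DecidableEq F]

lemma aux_sqrt (h2 : ringChar F ≠ 2) (c : F) :
    ∑ w : F, (if w ^ 2 = c then (1 : ℤ) else 0) = quadraticChar F c + 1 := by
  have h := quadraticChar_card_sqrts h2 c
  rw [Finset.sum_boole, ← h]
  norm_cast
  congr 1
  ext x
  simp

lemma aux_linear {B : F} (hB : B ≠ 0) (Cc : F) :
    ∑ x : F, (if B * x + Cc = 0 then (1 : ℤ) else 0) = 1 := by
  have key : ∀ x : F, (B * x + Cc = 0) ↔ x = -Cc / B := by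
    intro x
    rw [eq_div_iff hB]
    constructor <;> intro h <;> linear_combination h
  simp_rw [key]
  simp

lemma aux_quad (h2 : ringChar F ≠ 2) {A : F} (hA : A ≠ 0) (B Cc : F) :
    ∑ x : F, (if A * x ^ 2 + B * x + Cc = 0 then (1 : ℤ) else 0) =
      quadraticChar F (B ^ 2 - 4 * A * Cc) + 1 := by
  have h2' : (2 : F) ≠ 0 := Ring.two_ne_zero h2
  have h4A : (4 : F) * A ≠ 0 := by
    refine mul_ne_zero ?_ hA
    have : (4 : F) = 2 * 2 := by norm_num
    rw [this]; exact mul_ne_zero h2' h2'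
  have key : ∀ x : F, (A * x ^ 2 + B * x + Cc = 0) ↔
      (2 * A * x + B) ^ 2 = B ^ 2 - 4 * A * Cc := by
    intro x
    constructor
    · intro h; linear_combination 4 * A * h
    · intro h
      have h' : 4 * A * (A * x ^ 2 + B * x + Cc) = 0 := by linear_combination h
      rcases mul_eq_zero.mp h' with h'' | h''
      · exact absurd h'' h4A
      · exact h''
  simp_rw [key]
  have reind := Equiv.sum_comp
    ((Equiv.mulLeft₀ (2 * A) (mul_ne_zero h2' hA)).trans (Equiv.addRight B))
    (fun w : F => if w ^ 2 = B ^ 2 - 4 * A * Cc then (1 : ℤ) else 0)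
  simp only [Equiv.trans_apply, Equiv.coe_addRight, Equiv.mulLeft₀_apply] at reind
  rw [reind, aux_sqrt h2]

lemma aux_expand (b t : F) :
    ((X : F[X]) ^ 2 + C b * X + C t) ^ 2 =
      X ^ 4 + C (2 * b) * X ^ 3 + C (b ^ 2 + 2 * t) * X ^ 2 + C (2 * b * t) * X
        + C (t ^ 2) := by
  simp only [C_add, C_mul, C_pow, map_ofNat]
  ring

end Aux

theorem quartic_to_cubic_descent {F : Type*} [Field F] [Fintype F] [DecidableEq F]
    (h2 : ringChar F ≠ 2) (h3 : ringChar F ≠ 3) (a₀ a₁ a₂ a₃ : F)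
    (hsf : Squarefree
      (X ^ 4 + C a₃ * X ^ 3 + C a₂ * X ^ 2 + C a₁ * X + C a₀ : F[X])) :
    ∑ x : F, quadraticChar F (x ^ 4 + a₃ * x ^ 3 + a₂ * x ^ 2 + a₁ * x + a₀) =
      -1 + ∑ x : F, quadraticChar F
        (x ^ 3 + a₂ * x ^ 2 + (a₁ * a₃ - 4 * a₀) * x +
          (a₀ * (a₃ ^ 2 - 4 * a₂) + a₁ ^ 2)) := by
  have h2' : (2 : F) ≠ 0 := Ring.two_ne_zero h2
  have h4' : (4 : F) ≠ 0 := by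
    have : (4 : F) = 2 * 2 := by norm_num
    rw [this]; exact mul_ne_zero h2' h2'
  have h16' : (16 : F) ≠ 0 := by
    have : (16 : F) = 4 * 4 := by norm_num
    rw [this]; exact mul_ne_zero h4' h4'
  have hσ4 : quadraticChar F 4 = 1 := by
    have : (4 : F) = 2 ^ 2 := by norm_num
    rw [this, quadraticChar_sq_one' h2']
  have hσ16 : quadraticChar F 16 = 1 := by
    have : (16 : F) = 4 ^ 2 := by norm_num
    rw [this, quadraticChar_sq_one' h4']
  set T : ℤ := ∑ x : F, ∑ z : F,
      (if (4 * z + a₃ ^ 2 - 4 * a₂) * x ^ 2 + (2 * a₃ * z - 4 * a₁) * x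
          + (z ^ 2 - 4 * a₀) = 0 then 1 else 0) with hT
  -- left evaluation
  have lhs_eval : T =
      (∑ x : F, quadraticChar F (x ^ 4 + a₃ * x ^ 3 + a₂ * x ^ 2 + a₁ * x + a₀))
        + (Fintype.card F : ℤ) := by
    rw [hT]
    have step : ∀ x : F,
        (∑ z : F, (if (4 * z + a₃ ^ 2 - 4 * a₂) * x ^ 2 + (2 * a₃ * z - 4 * a₁) * x
            + (z ^ 2 - 4 * a₀) = 0 then (1 : ℤ) else 0)) =
          quadraticChar F (x ^ 4 + a₃ * x ^ 3 + a₂ * x ^ 2 + a₁ * x + a₀) + 1 := by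
      intro x
      have key : ∀ z : F,
          ((4 * z + a₃ ^ 2 - 4 * a₂) * x ^ 2 + (2 * a₃ * z - 4 * a₁) * x
              + (z ^ 2 - 4 * a₀) = 0) ↔
            (z + (2 * x ^ 2 + a₃ * x)) ^ 2 =
              4 * (x ^ 4 + a₃ * x ^ 3 + a₂ * x ^ 2 + a₁ * x + a₀) := by
        intro z
        constructor <;> intro h <;> linear_combination h
      simp_rw [key]
      have reind := Equiv.sum_comp (Equiv.addRight (2 * x ^ 2 + a₃ * x))
        (fun w : F => if w ^ 2 =
            4 * (x ^ 4 + a₃ * x ^ 3 + a₂ * x ^ 2 + a₁ * x + a₀) then (1 : ℤ) else 0)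
      simp only [Equiv.coe_addRight] at reind
      rw [aux_sqrt h2, map_mul, hσ4, one_mul] at reind
      convert reind using 2 with w
      split_ifs <;> simp_all
    rw [Finset.sum_congr rfl (fun x _ => step x), Finset.sum_add_distrib]
    simp [Finset.card_univ]
  -- right evaluation: count for each z
  have count_eval : ∀ z : F,
      (∑ x : F, (if (4 * z + a₃ ^ 2 - 4 * a₂) * x ^ 2 + (2 * a₃ * z - 4 * a₁) * x
          + (z ^ 2 - 4 * a₀) = 0 then (1 : ℤ) else 0)) =
        quadraticChar F ((-z) ^ 3 + a₂ * (-z) ^ 2 + (a₁ * a₃ - 4 * a₀) * (-z) +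
            (a₀ * (a₃ ^ 2 - 4 * a₂) + a₁ ^ 2)) +
          (if 4 * z + a₃ ^ 2 - 4 * a₂ = 0 then 0 else 1) := by
    intro z
    by_cases hA : 4 * z + a₃ ^ 2 - 4 * a₂ = 0
    · by_cases hB : 2 * a₃ * z - 4 * a₁ = 0
      · -- degenerate: would make f a square, contradiction unless C ≠ 0
        have hC : z ^ 2 - 4 * a₀ ≠ 0 := by
          intro hC0
          have h2'' : (2 : F) ≠ 0 := h2'
          have key2 : 2 * a₁ = a₃ * z := by
            apply mul_left_cancel₀ h2''
            linear_combination -hB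
          have ha₃ : a₃ = 2 * (a₃ / 2) := by field_simp
          have ha₂ : a₂ = (a₃ / 2) ^ 2 + 2 * (z / 2) := by
            field_simp; linear_combination -hA
          have ha₁ : a₁ = 2 * (a₃ / 2) * (z / 2) := by
            field_simp; linear_combination key2
          have ha₀ : a₀ = (z / 2) ^ 2 := by
            field_simp; linear_combination -hC0
          have hf2 : (X ^ 4 + C a₃ * X ^ 3 + C a₂ * X ^ 2 + C a₁ * X + C a₀ : F[X]) =
              ((X : F[X]) ^ 2 + C (a₃ / 2) * X + C (z / 2)) ^ 2 := by
            rw [aux_expand, ← ha₁, ← ha₂, ← ha₀, ← ha₃]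
          have hcontra := hsf ((X : F[X]) ^ 2 + C (a₃ / 2) * X + C (z / 2))
            (by rw [hf2]; exact ⟨1, by ring⟩)
          have hdeg : ((X : F[X]) ^ 2 + C (a₃ / 2) * X + C (z / 2)).natDegree = 2 := by
            have hrep : ((X : F[X]) ^ 2 + C (a₃ / 2) * X + C (z / 2)) =
                C 1 * X ^ 2 + C (a₃ / 2) * X + C (z / 2) := by rw [C_1, one_mul]
            rw [hrep, natDegree_quadratic one_ne_zero]
          have := natDegree_eq_zero_of_isUnit hcontra
          rw [hdeg] at this
          exact absurd this (by norm_num)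
        have hcount : (∑ x : F, (if (4 * z + a₃ ^ 2 - 4 * a₂) * x ^ 2
            + (2 * a₃ * z - 4 * a₁) * x + (z ^ 2 - 4 * a₀) = 0
              then (1 : ℤ) else 0)) = 0 := by
          refine Finset.sum_eq_zero fun x _ => ?_
          rw [if_neg]
          intro h
          exact hC (by linear_combination h - x ^ 2 * hA - x * hB)
        have hg : (-z) ^ 3 + a₂ * (-z) ^ 2 + (a₁ * a₃ - 4 * a₀) * (-z) +
            (a₀ * (a₃ ^ 2 - 4 * a₂) + a₁ ^ 2) = 0 := by
          have h0 : (16 : F) * ((-z) ^ 3 + a₂ * (-z) ^ 2 + (a₁ * a₃ - 4 * a₀) * (-z) +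
              (a₀ * (a₃ ^ 2 - 4 * a₂) + a₁ ^ 2)) = 0 := by
            linear_combination (2 * a₃ * z - 4 * a₁ + 4 * a₁ - 2 * a₃ * z) * hB
              + (2 * a₃ * z - 4 * a₁) * hB - 4 * (z ^ 2 - 4 * a₀) * hA
          exact (mul_eq_zero.mp h0).resolve_left h16'
        rw [hcount, hg, if_pos hA]
        simp
      · -- linear case
        have key : ∀ x : F, ((4 * z + a₃ ^ 2 - 4 * a₂) * x ^ 2
            + (2 * a₃ * z - 4 * a₁) * x + (z ^ 2 - 4 * a₀) = 0) ↔
              ((2 * a₃ * z - 4 * a₁) * x + (z ^ 2 - 4 * a₀) = 0) := by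
          intro x
          constructor <;> intro h
          · linear_combination h - x ^ 2 * hA
          · linear_combination h + x ^ 2 * hA
        simp_rw [key]
        rw [aux_linear hB, if_pos hA]
        have h16 : (16 : F) * ((-z) ^ 3 + a₂ * (-z) ^ 2 + (a₁ * a₃ - 4 * a₀) * (-z) +
            (a₀ * (a₃ ^ 2 - 4 * a₂) + a₁ ^ 2)) = (2 * a₃ * z - 4 * a₁) ^ 2 := by
          linear_combination (-4 * (z ^ 2 - 4 * a₀)) * hA
        have hg : (-z) ^ 3 + a₂ * (-z) ^ 2 + (a₁ * a₃ - 4 * a₀) * (-z) +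
            (a₀ * (a₃ ^ 2 - 4 * a₂) + a₁ ^ 2) =
              ((2 * a₃ * z - 4 * a₁) / 4) ^ 2 := by
          field_simp
          linear_combination h16
        rw [hg, quadraticChar_sq_one' (div_ne_zero hB h4')]
        norm_num
    · -- quadratic case
      rw [aux_quad h2 hA, if_neg hA]
      have h16 : (2 * a₃ * z - 4 * a₁) ^ 2 - 4 * (4 * z + a₃ ^ 2 - 4 * a₂)
          * (z ^ 2 - 4 * a₀) =
        16 * ((-z) ^ 3 + a₂ * (-z) ^ 2 + (a₁ * a₃ - 4 * a₀) * (-z) +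
            (a₀ * (a₃ ^ 2 - 4 * a₂) + a₁ ^ 2)) := by ring
      rw [h16, map_mul, hσ16, one_mul]
  have rhs_eval : T =
      (∑ z : F, quadraticChar F (z ^ 3 + a₂ * z ^ 2 + (a₁ * a₃ - 4 * a₀) * z +
          (a₀ * (a₃ ^ 2 - 4 * a₂) + a₁ ^ 2)))
        + ((Fintype.card F : ℤ) - 1) := by
    rw [hT, Finset.sum_comm]
    rw [Finset.sum_congr rfl (fun z _ => count_eval z), Finset.sum_add_distrib]
    congr 1
    · have := Equiv.sum_comp (Equiv.neg F)
        (fun w : F => (quadraticChar F (w ^ 3 + a₂ * w ^ 2 + (a₁ * a₃ - 4 * a₀) * w +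
          (a₀ * (a₃ ^ 2 - 4 * a₂) + a₁ ^ 2)) : ℤ))
      simp only [Equiv.neg_apply] at this
      exact this
    · have hone : ∑ z : F, (if 4 * z + (a₃ ^ 2 - 4 * a₂) = 0 then (1 : ℤ) else 0) = 1 :=
        aux_linear h4' _
      have hrw : ∀ z : F, (4 * z + a₃ ^ 2 - 4 * a₂) = 4 * z + (a₃ ^ 2 - 4 * a₂) :=
        fun z => by ring
      calc ∑ z : F, (if 4 * z + a₃ ^ 2 - 4 * a₂ = 0 then (0 : ℤ) else 1)
          = ∑ z : F, ((1 : ℤ) -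
              (if 4 * z + (a₃ ^ 2 - 4 * a₂) = 0 then (1 : ℤ) else 0)) := by
            refine Finset.sum_congr rfl fun z _ => ?_
            rw [hrw z]
            split <;> ring
        _ = (Fintype.card F : ℤ) - 1 := by
            rw [Finset.sum_sub_distrib, hone, Finset.sum_const, Finset.card_univ]
            simp
  have := lhs_eval.symm.trans rhs_eval
  linarith
end

section
/- Let a, b, c ∈ F_q with c ≠ 0. Then ∑_{x ∈ F_q} σ(x^4 + (2a - 4b)x^2 - 4cx + a^2) = ∑_{x ∈ F_q} σ(x^4 + (2b - 4a)x^2 - 4cx + b^2). -/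
open Finset

section Aux

variable {F : Type*} [Field F] [Fintype F] [DecidableEq F]

lemma sq_count (hF : ringChar F ≠ 2) (d : F) :
    ((univ.filter (fun y : F => y ^ 2 = d)).card : ℤ) = quadraticChar F d + 1 := by
  have := quadraticChar_card_sqrts hF d
  rwa [show {x : F | x ^ 2 = d}.toFinset = univ.filter (fun y : F => y ^ 2 = d) by
    ext x; simp] at this

lemma quad_count (hF : ringChar F ≠ 2) (A B C : F) (hA : A ≠ 0) :
    ((univ.filter (fun x : F => A * x ^ 2 + B * x + C = 0)).card : ℤ) =
      quadraticChar F (B ^ 2 - 4 * A * C) + 1 := by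
  have h2 : (2 : F) ≠ 0 := Ring.two_ne_zero hF
  have h4 : (4 : F) ≠ 0 := by
    have : (4 : F) = 2 * 2 := by norm_num
    rw [this]; exact mul_ne_zero h2 h2
  have h2A : 2 * A ≠ 0 := mul_ne_zero h2 hA
  rw [← sq_count hF (B ^ 2 - 4 * A * C)]
  congr 1
  apply Finset.card_nbij' (fun x => 2 * A * x + B) (fun y => (y - B) / (2 * A))
  · intro x hx
    simp only [mem_coe, mem_filter, mem_univ, true_and] at hx ⊢
    have key : (2 * A * x + B) ^ 2 - (B ^ 2 - 4 * A * C) =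
        4 * A * (A * x ^ 2 + B * x + C) := by ring
    have : (2 * A * x + B) ^ 2 - (B ^ 2 - 4 * A * C) = 0 := by rw [key, hx, mul_zero]
    exact sub_eq_zero.mp this
  · intro y hy
    simp only [mem_coe, mem_filter, mem_univ, true_and] at hy ⊢
    have key : A * ((y - B) / (2 * A)) ^ 2 + B * ((y - B) / (2 * A)) + C =
        (y ^ 2 - (B ^ 2 - 4 * A * C)) / (4 * A) := by
      field_simp
      ring
    rw [key, hy, sub_self, zero_div]
  · intro x _
    field_simp
    ring
  · intro y _
    field_simp
    ring

/-- The key step: the quartic character sum equals a cubic character sum (minus 1)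
that is symmetric in `a` and `b`. -/
lemma quartic_eq_cubic (hF : ringChar F ≠ 2) (a b c : F) (hc : c ≠ 0) :
    ∑ x : F, quadraticChar F (x ^ 4 + (2 * a - 4 * b) * x ^ 2 - 4 * c * x + a ^ 2) =
      (∑ w : F, quadraticChar F
        (2 * w ^ 3 - 4 * (a + b) * w ^ 2 + 8 * (a * b) * w + 4 * c ^ 2)) - 1 := by
  classical
  have h2 : (2 : F) ≠ 0 := Ring.two_ne_zero hF
  set q : ℤ := (Fintype.card F : ℤ) with hq
  -- Step 1: express each character value as a count of square roots
  have step1 : ∑ x : F, quadraticChar F (x ^ 4 + (2 * a - 4 * b) * x ^ 2 - 4 * c * x + a ^ 2)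
      = (∑ x : F, ((univ.filter (fun y : F =>
          y ^ 2 = x ^ 4 + (2 * a - 4 * b) * x ^ 2 - 4 * c * x + a ^ 2)).card : ℤ)) - q := by
    have hpt : ∀ x : F, quadraticChar F (x ^ 4 + (2 * a - 4 * b) * x ^ 2 - 4 * c * x + a ^ 2)
        = ((univ.filter (fun y : F =>
          y ^ 2 = x ^ 4 + (2 * a - 4 * b) * x ^ 2 - 4 * c * x + a ^ 2)).card : ℤ) - 1 := by
      intro x; rw [sq_count hF]; ring
    rw [Finset.sum_congr rfl (fun x _ => hpt x), Finset.sum_sub_distrib]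
    simp [hq]
  -- Step 2: substitute w = x^2 + a - y
  have step2 : ∀ x : F, ((univ.filter (fun y : F =>
        y ^ 2 = x ^ 4 + (2 * a - 4 * b) * x ^ 2 - 4 * c * x + a ^ 2)).card)
      = ((univ.filter (fun w : F =>
        (2 * w - 4 * b) * x ^ 2 - 4 * c * x + (2 * a * w - w ^ 2) = 0)).card) := by
    intro x
    apply Finset.card_nbij' (fun y => x ^ 2 + a - y) (fun w => x ^ 2 + a - w)
    · intro y hy
      simp only [mem_coe, mem_filter, mem_univ, true_and] at hy ⊢
      linear_combination -hy
    · intro w hw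
      simp only [mem_coe, mem_filter, mem_univ, true_and] at hw ⊢
      linear_combination -hw
    · intro y _; ring
    · intro w _; ring
  -- Step 3: count solutions in x for each w
  have step3 : ∀ w : F, ((univ.filter (fun x : F =>
        (2 * w - 4 * b) * x ^ 2 - 4 * c * x + (2 * a * w - w ^ 2) = 0)).card : ℤ)
      = quadraticChar F (2 * w ^ 3 - 4 * (a + b) * w ^ 2 + 8 * (a * b) * w + 4 * c ^ 2)
        + 1 - (if w = 2 * b then 1 else 0) := by
    intro w
    by_cases hw : w = 2 * b
    · subst hw
      rw [if_pos rfl]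
      have hx0 : ∀ x : F, ((2 * (2 * b) - 4 * b) * x ^ 2 - 4 * c * x +
          (2 * a * (2 * b) - (2 * b) ^ 2) = 0) ↔ x = (a * b - b ^ 2) / c := by
        intro x
        rw [eq_div_iff hc]
        constructor
        · intro h
          have h4 : (4 : F) ≠ 0 := by
            have : (4 : F) = 2 * 2 := by norm_num
            rw [this]; exact mul_ne_zero h2 h2
          have h' : 4 * (x * c - (a * b - b ^ 2)) = 0 := by linear_combination -h
          have := (mul_eq_zero.mp h').resolve_left h4
          linear_combination this
        · intro h; linear_combination (-4 : F) * h
      have hset : (univ.filter (fun x : F => (2 * (2 * b) - 4 * b) * x ^ 2 - 4 * c * x +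
          (2 * a * (2 * b) - (2 * b) ^ 2) = 0)) = {(a * b - b ^ 2) / c} := by
        ext x; simp [hx0 x]
      rw [hset, Finset.card_singleton]
      have hg : 2 * (2 * b) ^ 3 - 4 * (a + b) * (2 * b) ^ 2 + 8 * (a * b) * (2 * b) + 4 * c ^ 2
          = (2 * c) ^ 2 := by ring
      rw [hg, quadraticChar_sq_one' (mul_ne_zero h2 hc)]
      norm_num
    · rw [if_neg hw, sub_zero]
      have hA : 2 * w - 4 * b ≠ 0 := by
        intro h
        apply hw
        have : 2 * (w - 2 * b) = 0 := by linear_combination h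
        have h0 := (mul_eq_zero.mp this).resolve_left h2
        exact sub_eq_zero.mp h0
      have hset : (univ.filter (fun x : F => (2 * w - 4 * b) * x ^ 2 - 4 * c * x +
          (2 * a * w - w ^ 2) = 0)) = (univ.filter (fun x : F =>
          (2 * w - 4 * b) * x ^ 2 + (-(4 * c)) * x + (2 * a * w - w ^ 2) = 0)) := by
        apply Finset.filter_congr
        intro x _
        constructor
        · intro h; linear_combination h
        · intro h; linear_combination h
      rw [hset, quad_count hF _ _ _ hA]
      congr 1
      rw [show (-(4 * c)) ^ 2 - 4 * (2 * w - 4 * b) * (2 * a * w - w ^ 2)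
          = 2 ^ 2 * (2 * w ^ 3 - 4 * (a + b) * w ^ 2 + 8 * (a * b) * w + 4 * c ^ 2) by ring,
        map_mul, quadraticChar_sq_one' h2, one_mul]
  -- Step 4: swap the order of counting
  have swap : (∑ x : F, ((univ.filter (fun w : F =>
        (2 * w - 4 * b) * x ^ 2 - 4 * c * x + (2 * a * w - w ^ 2) = 0)).card : ℤ))
      = ∑ w : F, ((univ.filter (fun x : F =>
        (2 * w - 4 * b) * x ^ 2 - 4 * c * x + (2 * a * w - w ^ 2) = 0)).card : ℤ) := by
    simp_rw [Finset.card_filter]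
    push_cast
    rw [Finset.sum_comm]
  calc ∑ x : F, quadraticChar F (x ^ 4 + (2 * a - 4 * b) * x ^ 2 - 4 * c * x + a ^ 2)
      = (∑ x : F, ((univ.filter (fun y : F =>
          y ^ 2 = x ^ 4 + (2 * a - 4 * b) * x ^ 2 - 4 * c * x + a ^ 2)).card : ℤ)) - q := step1
    _ = (∑ w : F, ((univ.filter (fun x : F =>
          (2 * w - 4 * b) * x ^ 2 - 4 * c * x + (2 * a * w - w ^ 2) = 0)).card : ℤ)) - q := by
        rw [← swap]
        congr 1
        exact Finset.sum_congr rfl (fun x _ => by rw [step2 x])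
    _ = (∑ w : F, (quadraticChar F
          (2 * w ^ 3 - 4 * (a + b) * w ^ 2 + 8 * (a * b) * w + 4 * c ^ 2)
          + 1 - (if w = 2 * b then 1 else 0))) - q := by
        rw [Finset.sum_congr rfl (fun w _ => step3 w)]
    _ = (∑ w : F, quadraticChar F
          (2 * w ^ 3 - 4 * (a + b) * w ^ 2 + 8 * (a * b) * w + 4 * c ^ 2)) - 1 := by
        rw [Finset.sum_sub_distrib, Finset.sum_add_distrib]
        rw [Finset.sum_ite_eq' univ (2 * b) (fun _ => (1 : ℤ))]
        simp [hq]
        ring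

end Aux

theorem quartic_to_quartic {F : Type*} [Field F] [Fintype F] [DecidableEq F]
    (h2 : ringChar F ≠ 2) (h3 : ringChar F ≠ 3) (a b c : F) (hc : c ≠ 0) :
    ∑ x : F, quadraticChar F (x ^ 4 + (2 * a - 4 * b) * x ^ 2 - 4 * c * x + a ^ 2) =
      ∑ x : F, quadraticChar F (x ^ 4 + (2 * b - 4 * a) * x ^ 2 - 4 * c * x + b ^ 2) := by
  rw [quartic_eq_cubic h2 a b c hc, quartic_eq_cubic h2 b a c hc, add_comm b a, mul_comm b a]
end

section
/- (Master formula.) Let a_1, a_2, a_3, b_1, b_2, b_3, c_1, c_2, c_3 ∈ F_q. Define the row polynomials α(x) = a_1 x^2 + a_2 x + a_3, β(x) = b_1 x^2 + b_2 x + b_3, γ(x) = c_1 x^2 + c_2 x + c_3, and the down polynomials δ_1(u) = a_1 u^2 + b_1 u + c_1, δ_2(u) = a_2 u^2 + b_2 u + c_2, δ_3(u) = a_3 u^2 + b_3 u + c_3. Let n_α = #{x ∈ F_q : α(x) = 0}, n_{α,β,γ} = #{x ∈ F_q : α(x) = β(x) = γ(x) = 0}, n_{δ_1} = #{u ∈ F_q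 : δ_1(u) = 0}, and n_{δ_1,δ_2,δ_3} = #{u ∈ F_q : δ_1(u) = δ_2(u) = δ_3(u) = 0}. Then q·n_{α,β,γ} - n_α + ∑_{x ∈ F_q} σ(β(x)^2 - 4α(x)γ(x)) = q·n_{δ_1,δ_2,δ_3} - n_{δ_1} + ∑_{u ∈ F_q} σ(δ_2(u)^2 - 4δ_1(u)δ_3(u)). -/
open Finset

private lemma quad_root_count {F : Type*} [Field F] [Fintype F] [DecidableEq F]
    (h2 : ringChar F ≠ 2) (A B C : F) :
    ((univ.filter fun u : F => A * u ^ 2 + B * u + C = 0).card : ℤ) =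
      quadraticChar F (B ^ 2 - 4 * A * C) + (if A = 0 then 0 else 1) +
      (if A = 0 ∧ B = 0 ∧ C = 0 then (Fintype.card F : ℤ) else 0) := by
  have h2' : (2 : F) ≠ 0 := Ring.two_ne_zero h2
  by_cases hA : A = 0
  · subst hA
    by_cases hB : B = 0
    · subst hB
      by_cases hC : C = 0
      · subst hC
        simp [Finset.filter_true_of_mem, Finset.card_univ]
      · simp [hC]
    · have hset : (univ.filter fun u : F => 0 * u ^ 2 + B * u + C = 0) = {-C / B} := by
        ext u
        simp only [mem_filter, mem_univ, true_and, mem_singleton]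
        rw [zero_mul, zero_add]
        constructor
        · intro h
          rw [eq_div_iff hB]
          linear_combination h
        · intro h
          subst h
          field_simp
          ring
      rw [hset]
      have hD : quadraticChar F (B ^ 2 - 4 * 0 * C) = 1 := by
        rw [show B ^ 2 - 4 * 0 * C = B ^ 2 by ring]
        exact quadraticChar_sq_one' hB
      rw [hD]
      simp [hB]
  · -- quadratic case: bijection u ↦ 2*A*u + B with square roots of the discriminant
    have hA4 : (4 : F) * A ≠ 0 := by
      have h4 : (4 : F) ≠ 0 := by
        intro h; apply h2'; have : (2:F)*2 = 0 := by rw [← h]; norm_num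
        rcases mul_eq_zero.mp this with h' | h' <;> exact h'
      exact mul_ne_zero h4 hA
    have hcard : (univ.filter fun u : F => A * u ^ 2 + B * u + C = 0).card =
        ({x : F | x ^ 2 = B ^ 2 - 4 * A * C} : Set F).toFinset.card := by
      apply Finset.card_bij (fun u _ => 2 * A * u + B)
      · intro u hu
        simp only [mem_filter, mem_univ, true_and] at hu
        simp only [Set.mem_toFinset, Set.mem_setOf_eq]
        linear_combination 4 * A * hu
      · intro u hu v hv h
        have h2A : (2 : F) * A ≠ 0 := mul_ne_zero h2' hA
        have := add_right_cancel h
        exact mul_left_cancel₀ h2A this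
      · intro y hy
        simp only [Set.mem_toFinset, Set.mem_setOf_eq] at hy
        have h2A : (2 : F) * A ≠ 0 := mul_ne_zero h2' hA
        have hu2 : 2 * A * ((y - B) / (2 * A)) = y - B := by field_simp
        refine ⟨(y - B) / (2 * A), ?_, ?_⟩
        · simp only [mem_filter, mem_univ, true_and]
          apply mul_left_cancel₀ hA4
          rw [mul_zero]
          linear_combination (2 * A * ((y - B) / (2 * A)) + B + y) * hu2 + hy
        · linear_combination hu2
    rw [hcard]
    have := quadraticChar_card_sqrts h2 (B ^ 2 - 4 * A * C)
    simp only [hA, if_false, false_and]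
    push_cast [this]
    ring

theorem master_formula {F : Type*} [Field F] [Fintype F] [DecidableEq F]
    (h2 : ringChar F ≠ 2) (h3 : ringChar F ≠ 3)
    (a₁ a₂ a₃ b₁ b₂ b₃ c₁ c₂ c₃ : F)
    (α β γ δ₁ δ₂ δ₃ : F → F)
    (hα : ∀ x, α x = a₁ * x ^ 2 + a₂ * x + a₃)
    (hβ : ∀ x, β x = b₁ * x ^ 2 + b₂ * x + b₃)
    (hγ : ∀ x, γ x = c₁ * x ^ 2 + c₂ * x + c₃)
    (hδ₁ : ∀ u, δ₁ u = a₁ * u ^ 2 + b₁ * u + c₁)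
    (hδ₂ : ∀ u, δ₂ u = a₂ * u ^ 2 + b₂ * u + c₂)
    (hδ₃ : ∀ u, δ₃ u = a₃ * u ^ 2 + b₃ * u + c₃) :
    (Fintype.card F : ℤ) *
        ((univ.filter fun x : F => α x = 0 ∧ β x = 0 ∧ γ x = 0).card : ℤ) -
        ((univ.filter fun x : F => α x = 0).card : ℤ) +
        ∑ x : F, quadraticChar F (β x ^ 2 - 4 * α x * γ x) =
      (Fintype.card F : ℤ) *
        ((univ.filter fun u : F => δ₁ u = 0 ∧ δ₂ u = 0 ∧ δ₃ u = 0).card : ℤ) -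
        ((univ.filter fun u : F => δ₁ u = 0).card : ℤ) +
        ∑ u : F, quadraticChar F (δ₂ u ^ 2 - 4 * δ₁ u * δ₃ u) := by
  -- Number of roots in `u` for each `x`
  have key : ∀ x : F,
      ((univ.filter fun u : F => α x * u ^ 2 + β x * u + γ x = 0).card : ℤ) =
        quadraticChar F (β x ^ 2 - 4 * α x * γ x) + (if α x = 0 then 0 else 1) +
        (if α x = 0 ∧ β x = 0 ∧ γ x = 0 then (Fintype.card F : ℤ) else 0) :=
    fun x => quad_root_count h2 (α x) (β x) (γ x)
  have key' : ∀ u : F,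
      ((univ.filter fun x : F => δ₁ u * x ^ 2 + δ₂ u * x + δ₃ u = 0).card : ℤ) =
        quadraticChar F (δ₂ u ^ 2 - 4 * δ₁ u * δ₃ u) + (if δ₁ u = 0 then 0 else 1) +
        (if δ₁ u = 0 ∧ δ₂ u = 0 ∧ δ₃ u = 0 then (Fintype.card F : ℤ) else 0) :=
    fun u => quad_root_count h2 (δ₁ u) (δ₂ u) (δ₃ u)
  -- Symmetry of the double count
  have symm : ∑ x : F, ((univ.filter fun u : F => α x * u ^ 2 + β x * u + γ x = 0).card : ℤ)
      = ∑ u : F, ((univ.filter fun x : F => δ₁ u * x ^ 2 + δ₂ u * x + δ₃ u = 0).card : ℤ) := by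
    simp only [Finset.card_filter]
    push_cast
    rw [Finset.sum_comm]
    refine Finset.sum_congr rfl fun u _ => Finset.sum_congr rfl fun x _ => ?_
    have heq : α x * u ^ 2 + β x * u + γ x = δ₁ u * x ^ 2 + δ₂ u * x + δ₃ u := by
      rw [hα, hβ, hγ, hδ₁, hδ₂, hδ₃]; ring
    rw [heq]
  have e1 : ∀ (f : F → F), ∑ x : F, (if f x = 0 then (0:ℤ) else 1) =
      (Fintype.card F : ℤ) - ((univ.filter fun x : F => f x = 0).card : ℤ) := by
    intro f
    have h : ∀ x : F, (if f x = 0 then (0:ℤ) else 1) = 1 - (if f x = 0 then 1 else 0) := by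
      intro x; split <;> ring
    rw [Finset.sum_congr rfl fun x _ => h x, Finset.sum_sub_distrib, Finset.sum_const,
      Finset.card_univ, Finset.card_filter]
    push_cast
    ring
  have e2 : ∀ (p : F → Prop) (_ : DecidablePred p),
      ∑ x : F, (if p x then (Fintype.card F : ℤ) else 0) =
      (Fintype.card F : ℤ) * ((univ.filter p).card : ℤ) := by
    intro p hp
    rw [← Finset.sum_filter, Finset.sum_const, nsmul_eq_mul]
    ring
  have L : ∑ x : F, ((univ.filter fun u : F => α x * u ^ 2 + β x * u + γ x = 0).card : ℤ)
      = (∑ x : F, quadraticChar F (β x ^ 2 - 4 * α x * γ x))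
        + ((Fintype.card F : ℤ) - ((univ.filter fun x : F => α x = 0).card : ℤ))
        + (Fintype.card F : ℤ) *
          ((univ.filter fun x : F => α x = 0 ∧ β x = 0 ∧ γ x = 0).card : ℤ) := by
    rw [Finset.sum_congr rfl fun x _ => key x, Finset.sum_add_distrib, Finset.sum_add_distrib,
      e1 α, e2 _ _]
  have R : ∑ u : F, ((univ.filter fun x : F => δ₁ u * x ^ 2 + δ₂ u * x + δ₃ u = 0).card : ℤ)
      = (∑ u : F, quadraticChar F (δ₂ u ^ 2 - 4 * δ₁ u * δ₃ u))
        + ((Fintype.card F : ℤ) - ((univ.filter fun u : F => δ₁ u = 0).card : ℤ))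
        + (Fintype.card F : ℤ) *
          ((univ.filter fun u : F => δ₁ u = 0 ∧ δ₂ u = 0 ∧ δ₃ u = 0).card : ℤ) := by
    rw [Finset.sum_congr rfl fun u _ => key' u, Finset.sum_add_distrib, Finset.sum_add_distrib,
      e1 δ₁, e2 _ _]
  rw [L, R] at symm
  linarith
end

section
/- Let f(x), g(x), h(x) be polynomials with coefficients in F_q. Then the number of pairs (x, y) ∈ F_q × F_q satisfying f(x)y^2 + g(x)y + h(x) = 0 equals q·(1 + n_{f,g,h}) - n_f + ∑_{x ∈ F_q} σ(g(x)^2 - 4 f(x) h(x)), where n_f = #{x ∈ F_q : f(x) = 0} and n_{f,g,h} = #{x ∈ F_q : f(x) = g(x) = h(x) = 0}. -/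
open Polynomial Finset

lemma count_y {F : Type*} [Field F] [Fintype F] [DecidableEq F]
    (h2 : ringChar F ≠ 2) (a b c : F) :
    ((univ.filter fun y : F => a * y ^ 2 + b * y + c = 0).card : ℤ) =
      1 + (if a = 0 ∧ b = 0 ∧ c = 0 then (Fintype.card F : ℤ) else 0)
        - (if a = 0 then 1 else 0) + quadraticChar F (b ^ 2 - 4 * a * c) := by
  have h2' : (2 : F) ≠ 0 := Ring.two_ne_zero h2
  by_cases ha : a = 0
  · subst ha
    by_cases hb : b = 0
    · subst hb
      by_cases hc : c = 0
      · subst hc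
        simp [filter_true_of_mem, Finset.card_univ]
      · simp [hc, filter_false_of_mem]
    · have : (univ.filter fun y : F => 0 * y ^ 2 + b * y + c = 0)
          = {-c / b} := by
        ext y
        simp only [mem_filter, mem_univ, true_and, mem_singleton]
        constructor
        · intro hy; field_simp at hy ⊢; linear_combination hy
        · intro hy; subst hy; field_simp; ring
      rw [this]
      have : quadraticChar F (b ^ 2 - 4 * 0 * c) = 1 := by
        rw [show b ^ 2 - 4 * 0 * c = b ^ 2 by ring]
        exact quadraticChar_sq_one' hb
      rw [this]
      simp [hb]
  · -- a ≠ 0 : bijection y ↦ 2*a*y + b with sqrts of discriminant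
    have key : (univ.filter fun y : F => a * y ^ 2 + b * y + c = 0).card
        = (univ.filter fun z : F => z ^ 2 = b ^ 2 - 4 * a * c).card := by
      apply Finset.card_nbij' (fun y => 2 * a * y + b) (fun z => (z - b) / (2 * a))
      · intro y hy
        simp only [mem_coe, mem_filter, mem_univ, true_and] at hy ⊢
        linear_combination (4 * a) * hy
      · intro z hz
        simp only [mem_coe, mem_filter, mem_univ, true_and] at hz ⊢
        have h2a : (2 * a) ≠ 0 := mul_ne_zero h2' ha
        have h4a : (4 * a) ≠ 0 := by
          intro hh
          apply h2a
          have : (4 : F) = 2 * 2 := by norm_num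
          rw [this] at hh
          rcases mul_eq_zero.mp hh with h' | h'
          · exact absurd (mul_self_eq_zero.mp h') h2'
          · rw [h']; ring
        have key : a * ((z - b) / (2 * a)) ^ 2 + b * ((z - b) / (2 * a)) + c
            = (z ^ 2 - (b ^ 2 - 4 * a * c)) / (4 * a) := by
          have h4 : (4 : F) ≠ 0 := left_ne_zero_of_mul h4a
          field_simp
          ring
        rw [key, hz]
        simp
      · intro y _
        have h2a : (2 * a) ≠ 0 := mul_ne_zero h2' ha
        field_simp
        ring
      · intro z _
        have h2a : (2 * a) ≠ 0 := mul_ne_zero h2' ha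
        field_simp
        ring
    have hsq := quadraticChar_card_sqrts h2 (b ^ 2 - 4 * a * c)
    have hset : ({x : F | x ^ 2 = b ^ 2 - 4 * a * c} : Set F).toFinset
        = univ.filter fun z : F => z ^ 2 = b ^ 2 - 4 * a * c := by
      ext z; simp
    rw [hset] at hsq
    rw [key, hsq]
    simp [ha]
    ring

theorem solution_count_lemma {F : Type*} [Field F] [Fintype F] [DecidableEq F]
    (h2 : ringChar F ≠ 2) (h3 : ringChar F ≠ 3) (f g h : F[X]) :
    ((univ.filter fun p : F × F =>
        f.eval p.1 * p.2 ^ 2 + g.eval p.1 * p.2 + h.eval p.1 = 0).card : ℤ) =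
      (Fintype.card F : ℤ) *
          (1 + ((univ.filter fun x : F =>
            f.eval x = 0 ∧ g.eval x = 0 ∧ h.eval x = 0).card : ℤ)) -
        ((univ.filter fun x : F => f.eval x = 0).card : ℤ) +
        ∑ x : F, quadraticChar F (g.eval x ^ 2 - 4 * f.eval x * h.eval x) := by
  have split : ((univ.filter fun p : F × F =>
        f.eval p.1 * p.2 ^ 2 + g.eval p.1 * p.2 + h.eval p.1 = 0).card : ℤ)
      = ∑ x : F, ((univ.filter fun y : F =>
          f.eval x * y ^ 2 + g.eval x * y + h.eval x = 0).card : ℤ) := by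
    rw [Finset.card_filter]
    push_cast
    rw [Fintype.sum_prod_type]
    congr 1
    ext x
    rw [Finset.card_filter]
    push_cast
    rfl
  rw [split]
  have := fun x : F => count_y h2 (f.eval x) (g.eval x) (h.eval x)
  simp_rw [this]
  rw [Finset.sum_add_distrib, Finset.sum_sub_distrib, Finset.sum_add_distrib]
  have e1 : ∑ _x : F, (1 : ℤ) = (Fintype.card F : ℤ) := by simp
  have e2 : ∑ x : F, (if f.eval x = 0 ∧ g.eval x = 0 ∧ h.eval x = 0
      then (Fintype.card F : ℤ) else 0)
      = (Fintype.card F : ℤ) * ((univ.filter fun x : F =>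
        f.eval x = 0 ∧ g.eval x = 0 ∧ h.eval x = 0).card : ℤ) := by
    rw [Finset.sum_ite, Finset.sum_const, Finset.sum_const]
    simp [mul_comm]
  have e3 : ∑ x : F, (if f.eval x = 0 then (1 : ℤ) else 0)
      = ((univ.filter fun x : F => f.eval x = 0).card : ℤ) := by
    simp [Finset.sum_boole]
  rw [e1, e2, e3]
  ring
end

section
/- Let b, c ∈ F_q with b^2 ≠ 4c. Then ∑_{x ∈ F_q} σ(x^4 + b x^2 + c) = -1 + ∑_{x ∈ F_q} σ(x^3 + b x^2 + c x). -/
open Finset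

-- Substitution y = x^2
lemma sq_sum {F : Type*} [Field F] [Fintype F] [DecidableEq F] (hF : ringChar F ≠ 2)
    (g : F → ℤ) : ∑ x : F, g (x ^ 2) = ∑ y : F, (quadraticChar F y + 1) * g y := by
  rw [← Finset.sum_fiberwise_of_maps_to (g := fun x : F => x ^ 2)
    (fun x _ => Finset.mem_univ (x ^ 2)) (fun x => g (x ^ 2))]
  refine Finset.sum_congr rfl fun y _ => ?_
  rw [Finset.sum_congr rfl (fun x hx => by
    rw [(Finset.mem_filter.mp hx).2]), Finset.sum_const, nsmul_eq_mul]
  congr 1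
  have h := quadraticChar_card_sqrts hF y
  rw [Set.toFinset_setOf] at h
  exact_mod_cast h

lemma shift_sum {F : Type*} [Field F] [Fintype F] (f : F → ℤ) (a : F) :
    ∑ x : F, f (x + a) = ∑ x : F, f x :=
  Fintype.sum_equiv (Equiv.addRight a) _ _ (fun x => rfl)

lemma sum_mul_sub {F : Type*} [Field F] [Fintype F] [DecidableEq F]
    (hF : ringChar F ≠ 2) {d : F} (hd : d ≠ 0) :
    ∑ y : F, quadraticChar F (y * (y - d)) = -1 := by
  rw [← Finset.add_sum_erase Finset.univ _ (Finset.mem_univ (0 : F))]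
  rw [zero_mul, MulChar.map_zero, zero_add]
  have key : ∑ y ∈ Finset.univ.erase (0 : F), quadraticChar F (y * (y - d))
      = ∑ t ∈ Finset.univ.erase (1 : F), quadraticChar F t := by
    refine Finset.sum_nbij' (fun y => 1 - d * y⁻¹) (fun t => d / (1 - t)) ?_ ?_ ?_ ?_ ?_
    · intro y hy
      have hy0 : y ≠ 0 := Finset.ne_of_mem_erase hy
      simp only [Finset.mem_erase, Finset.mem_univ, and_true]
      intro h
      have h' := sub_eq_self.mp h
      rcases mul_eq_zero.mp h' with h'' | h''
      · exact hd h''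
      · exact hy0 (inv_eq_zero.mp h'')
    · intro t ht
      have ht1 : t ≠ 1 := Finset.ne_of_mem_erase ht
      simp only [Finset.mem_erase, Finset.mem_univ, and_true]
      exact div_ne_zero hd (sub_ne_zero.mpr ht1.symm)
    · intro y hy
      have hy0 : y ≠ 0 := Finset.ne_of_mem_erase hy
      field_simp
      rw [sub_sub_cancel, div_self hd]
    · intro t ht
      have ht1 : t ≠ 1 := Finset.ne_of_mem_erase ht
      have : (1 : F) - t ≠ 0 := sub_ne_zero.mpr ht1.symm
      field_simp
      ring
    · intro y hy
      have hy0 : y ≠ 0 := Finset.ne_of_mem_erase hy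
      have : y * (y - d) = y ^ 2 * (1 - d * y⁻¹) := by field_simp
      rw [this, map_mul, quadraticChar_sq_one' hy0, one_mul]
  rw [key, Finset.sum_erase_eq_sub (Finset.mem_univ (1 : F)),
    quadraticChar_sum_zero hF, map_one, zero_sub]


lemma quad_sum {F : Type*} [Field F] [Fintype F] [DecidableEq F] (hF : ringChar F ≠ 2)
    (b c : F) (hbc : b ^ 2 ≠ 4 * c) :
    ∑ x : F, quadraticChar F (x ^ 2 + b * x + c) = -1 := by
  have h2 : (2 : F) ≠ 0 := Ring.two_ne_zero hF
  have h4 : (4 : F) ≠ 0 := by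
    intro h; apply h2
    have : (4 : F) = 2 * 2 := by norm_num
    rcases mul_eq_zero.mp (this ▸ h) with h' | h' <;> exact h'
  set d : F := b ^ 2 / 4 - c with hd_def
  have hd : d ≠ 0 := by
    rw [hd_def, sub_ne_zero]
    intro h; apply hbc
    field_simp at h
    linear_combination h
  have hcomp : ∀ x : F, x ^ 2 + b * x + c = (x + b / 2) ^ 2 - d := by
    intro x
    rw [hd_def]
    field_simp
    ring
  calc ∑ x : F, quadraticChar F (x ^ 2 + b * x + c)
      = ∑ x : F, quadraticChar F ((x + b / 2) ^ 2 - d) := by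
        exact Finset.sum_congr rfl fun x _ => by rw [hcomp]
    _ = ∑ x : F, quadraticChar F (x ^ 2 - d) := shift_sum (fun z => quadraticChar F (z ^ 2 - d)) (b / 2)
    _ = ∑ y : F, (quadraticChar F y + 1) * quadraticChar F (y - d) := sq_sum hF (fun t => quadraticChar F (t - d))
    _ = ∑ y : F, quadraticChar F (y * (y - d)) + ∑ y : F, quadraticChar F (y - d) := by
        rw [← Finset.sum_add_distrib]
        exact Finset.sum_congr rfl fun y _ => by rw [add_mul, one_mul, ← map_mul]
    _ = -1 := by
        rw [sum_mul_sub hF hd]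
        have : ∑ y : F, quadraticChar F (y - d) = 0 := by
          rw [show (fun y : F => quadraticChar F (y - d)) = fun y : F => quadraticChar F (y + (-d)) by
            funext y; rw [sub_eq_add_neg]]
          rw [shift_sum (fun t => quadraticChar F t) (-d), quadraticChar_sum_zero hF]
        rw [this, add_zero]

theorem biquadratic_descent {F : Type*} [Field F] [Fintype F] [DecidableEq F]
    (h2 : ringChar F ≠ 2) (h3 : ringChar F ≠ 3) (b c : F) (hbc : b ^ 2 ≠ 4 * c) :
    ∑ x : F, quadraticChar F (x ^ 4 + b * x ^ 2 + c) =
      -1 + ∑ x : F, quadraticChar F (x ^ 3 + b * x ^ 2 + c * x) := by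
  have step1 : ∑ x : F, quadraticChar F (x ^ 4 + b * x ^ 2 + c)
      = ∑ x : F, quadraticChar F ((x ^ 2) ^ 2 + b * x ^ 2 + c) :=
    Finset.sum_congr rfl fun x _ => by ring_nf
  rw [step1, sq_sum h2 (fun y => quadraticChar F (y ^ 2 + b * y + c))]
  have : ∑ y : F, (quadraticChar F y + 1) * quadraticChar F (y ^ 2 + b * y + c)
      = ∑ y : F, quadraticChar F (y ^ 3 + b * y ^ 2 + c * y)
        + ∑ y : F, quadraticChar F (y ^ 2 + b * y + c) := by
    rw [← Finset.sum_add_distrib]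
    refine Finset.sum_congr rfl fun y _ => ?_
    rw [add_mul, one_mul, ← map_mul]
    congr 2
    ring
  rw [this, quad_sum h2 b c hbc, add_comm]
end

section
/- Let a, b, c ∈ F_q with (a, c) ≠ (0, 0) and (b, c) ≠ (0, 0). Then ∑_{x ∈ F_q} σ((x^2 + a)^2 - 4x(bx + c)) = ∑_{x ∈ F_q} σ((x^2 + b)^2 - 4x(ax + c)). -/
open Finset

private lemma card_quadratic_aux {F : Type*} [Field F] [Fintype F] [DecidableEq F]
    (h2 : ringChar F ≠ 2) (A B C : F) (hA : A ≠ 0) :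
    (({x : F | A * x ^ 2 + B * x + C = 0} : Set F).toFinset.card : ℤ) =
      quadraticChar F (B ^ 2 - 4 * A * C) + 1 := by
  have h2' : (2 : F) ≠ 0 := Ring.two_ne_zero h2
  rw [← quadraticChar_card_sqrts h2 (B ^ 2 - 4 * A * C)]
  congr 1
  apply Finset.card_bij' (fun x _ => 2 * A * x + B) (fun y _ => (y - B) / (2 * A))
  · intro x hx
    simp only [Set.mem_toFinset, Set.mem_setOf_eq] at hx ⊢
    linear_combination 4 * A * hx
  · intro y hy
    simp only [Set.mem_toFinset, Set.mem_setOf_eq] at hy ⊢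
    have h2A : 2 * A ≠ 0 := mul_ne_zero h2' hA
    field_simp
    linear_combination hy
  · intro x hx
    have h2A : 2 * A ≠ 0 := mul_ne_zero h2' hA
    field_simp
    ring
  · intro y hy
    have h2A : 2 * A ≠ 0 := mul_ne_zero h2' hA
    field_simp
    ring

private lemma myFilter_card_eq {F : Type*} [Fintype F] [DecidableEq F] (p : F → Prop)
    [DecidablePred p] :
    ((univ.filter p).card : ℤ) = (({x : F | p x} : Set F).toFinset.card : ℤ) := by
  congr 1
  apply Finset.card_bij (fun x _ => x)
  · intro x hx; simp_all
  · intro x _ y _ h; exact h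
  · intro x hx; exact ⟨x, by simp_all, rfl⟩

private lemma key_lemma {F : Type*} [Field F] [Fintype F] [DecidableEq F]
    (h2 : ringChar F ≠ 2) (a b c : F) (h : c ≠ 0 ∨ (b ≠ 0 ∧ a ≠ b)) :
    ∑ x : F, quadraticChar F ((x ^ 2 + a) ^ 2 - 4 * x * (b * x + c)) =
      (∑ u : F, quadraticChar F (c ^ 2 + 4 * u * (u - a) * (u - b))) - 1 := by
  -- step 1: per-x count
  have step1 : ∀ x : F,
      ((univ.filter (fun u : F => (b - u) * x ^ 2 + c * x + (u ^ 2 - a * u) = 0)).card : ℤ) =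
        quadraticChar F ((x ^ 2 + a) ^ 2 - 4 * x * (b * x + c)) + 1 := by
    intro x
    have key := card_quadratic_aux h2 (1 : F) (-(x ^ 2 + a)) (b * x ^ 2 + c * x) one_ne_zero
    rw [myFilter_card_eq]
    have hset : ({u : F | (b - u) * x ^ 2 + c * x + (u ^ 2 - a * u) = 0} : Set F) =
        {u : F | 1 * u ^ 2 + -(x ^ 2 + a) * u + (b * x ^ 2 + c * x) = 0} := by
      ext u
      constructor <;> intro hu <;> (simp only [Set.mem_setOf_eq] at hu ⊢; linear_combination hu)
    simp only [hset]
    rw [key]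
    congr 2
    ring
  -- step 2: per-u count
  have step2 : ∀ u : F,
      ((univ.filter (fun x : F => (b - u) * x ^ 2 + c * x + (u ^ 2 - a * u) = 0)).card : ℤ) =
        quadraticChar F (c ^ 2 + 4 * u * (u - a) * (u - b)) + (if u = b then 0 else 1) := by
    intro u
    by_cases hu : u = b
    · rw [if_pos hu, add_zero, hu]
      by_cases hc : c = 0
      · obtain ⟨hb, hab⟩ : b ≠ 0 ∧ a ≠ b := by
          rcases h with h | h
          · exact absurd hc h
          · exact h
        have hargs : c ^ 2 + 4 * b * (b - a) * (b - b) = 0 := by rw [hc]; ring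
        rw [hargs, quadraticChar_zero]
        have hfilter : (univ.filter
            (fun x : F => (b - b) * x ^ 2 + c * x + (b ^ 2 - a * b) = 0)) = ∅ := by
          apply Finset.filter_false_of_mem
          intro x _
          rw [hc]
          intro hx
          apply hab
          have hx' : b * (b - a) = 0 := by linear_combination hx
          rcases mul_eq_zero.mp hx' with h' | h'
          · exact absurd h' hb
          · exact absurd (sub_eq_zero.mp h').symm hab
        rw [hfilter]
        simp
      · have hargs : c ^ 2 + 4 * b * (b - a) * (b - b) = c ^ 2 := by ring
        rw [hargs, quadraticChar_sq_one' hc]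
        have heq : ∀ x : F, ((b - b) * x ^ 2 + c * x + (b ^ 2 - a * b) = 0) ↔
            x = -(b ^ 2 - a * b) / c := by
          intro x
          rw [eq_div_iff hc]
          constructor <;> intro hx <;> linear_combination hx
        have hone : (univ.filter (fun x : F => (b - b) * x ^ 2 + c * x + (b ^ 2 - a * b) = 0)) =
            {-(b ^ 2 - a * b) / c} := by
          ext x
          simp only [Finset.mem_filter, Finset.mem_univ, true_and, Finset.mem_singleton, heq x]
        rw [hone]
        simp
    · have hA : b - u ≠ 0 := sub_ne_zero.mpr (Ne.symm hu)
      rw [if_neg hu, myFilter_card_eq,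
        card_quadratic_aux h2 (b - u) c (u ^ 2 - a * u) hA]
      congr 2
      ring
  -- Fubini
  have fubini :
      ∑ x : F, ((univ.filter
          (fun u : F => (b - u) * x ^ 2 + c * x + (u ^ 2 - a * u) = 0)).card : ℤ) =
      ∑ u : F, ((univ.filter
          (fun x : F => (b - u) * x ^ 2 + c * x + (u ^ 2 - a * u) = 0)).card : ℤ) := by
    simp only [Finset.card_filter]
    push_cast
    rw [Finset.sum_comm]
  have lhs_eq : ∑ x : F, ((univ.filter
        (fun u : F => (b - u) * x ^ 2 + c * x + (u ^ 2 - a * u) = 0)).card : ℤ) =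
      (∑ x : F, quadraticChar F ((x ^ 2 + a) ^ 2 - 4 * x * (b * x + c))) +
        (Fintype.card F : ℤ) := by
    rw [Finset.sum_congr rfl (fun x _ => step1 x), Finset.sum_add_distrib]
    simp
  have ite_sum : (∑ u : F, if u = b then (0 : ℤ) else 1) = (Fintype.card F : ℤ) - 1 := by
    rw [Finset.sum_ite, Finset.sum_const, Finset.sum_const]
    rw [Finset.filter_eq', if_pos (Finset.mem_univ b), Finset.filter_ne']
    simp [Finset.card_erase_of_mem]
    have : (0:ℤ) < Fintype.card F := by positivity
    omega
  have rhs_eq : ∑ u : F, ((univ.filter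
        (fun x : F => (b - u) * x ^ 2 + c * x + (u ^ 2 - a * u) = 0)).card : ℤ) =
      (∑ u : F, quadraticChar F (c ^ 2 + 4 * u * (u - a) * (u - b))) +
        ((Fintype.card F : ℤ) - 1) := by
    rw [Finset.sum_congr rfl (fun u _ => step2 u), Finset.sum_add_distrib, ite_sum]
  have := lhs_eq.symm.trans (fubini.trans rhs_eq)
  linarith

theorem symmetric_quartic_formula {F : Type*} [Field F] [Fintype F] [DecidableEq F]
    (h2 : ringChar F ≠ 2) (h3 : ringChar F ≠ 3) (a b c : F)
    (hac : (a, c) ≠ (0, 0)) (hbc : (b, c) ≠ (0, 0)) :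
    ∑ x : F, quadraticChar F ((x ^ 2 + a) ^ 2 - 4 * x * (b * x + c)) =
      ∑ x : F, quadraticChar F ((x ^ 2 + b) ^ 2 - 4 * x * (a * x + c)) := by
  by_cases hab : a = b
  · subst hab; rfl
  · have h1 : c ≠ 0 ∨ (b ≠ 0 ∧ a ≠ b) := by
      by_cases hc : c = 0
      · right
        refine ⟨?_, hab⟩
        intro hb
        exact hbc (by rw [hb, hc])
      · left; exact hc
    have h2'' : c ≠ 0 ∨ (a ≠ 0 ∧ b ≠ a) := by
      by_cases hc : c = 0
      · right
        refine ⟨?_, Ne.symm hab⟩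
        intro ha
        exact hac (by rw [ha, hc])
      · left; exact hc
    rw [key_lemma h2 a b c h1, key_lemma h2 b a c h2'']
    congr 1
    apply Finset.sum_congr rfl
    intro u _
    congr 1
    ring
end

section
/- Let a, b ∈ F_q with a ≠ 0 and b ≠ 0. Then ∑_{x ∈ F_q} σ(x)·σ((x + a)^2 - 4bx) = ∑_{x ∈ F_q} σ(x)·σ((x + b)^2 - 4ax). -/
open Finset

lemma cubic_key {F : Type*} [Field F] [Fintype F] [DecidableEq F]
    (h2 : ringChar F ≠ 2) (a b : F) :
    ∑ x : F, quadraticChar F x * quadraticChar F ((x + a) ^ 2 - 4 * b * x) =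
      ∑ t : F, quadraticChar F (t * (t - a) * (t - b)) := by
  have h2' : (2 : F) ≠ 0 := Ring.two_ne_zero h2
  set σ := quadraticChar F with hσ
  -- Step A: rewrite σ(D x) via the number of square roots
  have hA : ∀ x : F, σ x * σ ((x + a) ^ 2 - 4 * b * x) =
      (∑ y : F, if y ^ 2 = (x + a) ^ 2 - 4 * b * x then (σ x : ℤ) else 0) - σ x := by
    intro x
    have hcard : (#{y : F | y ^ 2 = (x + a) ^ 2 - 4 * b * x}.toFinset : ℤ) =
        σ ((x + a) ^ 2 - 4 * b * x) + 1 := quadraticChar_card_sqrts h2 _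
    have hfin : {y : F | y ^ 2 = (x + a) ^ 2 - 4 * b * x}.toFinset =
        univ.filter (fun y : F => y ^ 2 = (x + a) ^ 2 - 4 * b * x) := by
      ext y; simp
    rw [← Finset.sum_filter, Finset.sum_const, ← hfin, nsmul_eq_mul, hcard]
    ring
  calc ∑ x : F, σ x * σ ((x + a) ^ 2 - 4 * b * x)
      = ∑ x : F, ((∑ y : F, if y ^ 2 = (x + a) ^ 2 - 4 * b * x then (σ x : ℤ) else 0) - σ x) := by
        exact Finset.sum_congr rfl fun x _ => hA x
    _ = ∑ x : F, ∑ y : F, (if y ^ 2 = (x + a) ^ 2 - 4 * b * x then (σ x : ℤ) else 0) := by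
        rw [Finset.sum_sub_distrib, quadraticChar_sum_zero h2, sub_zero]
    _ = ∑ x : F, ∑ t : F, (if t ^ 2 - (x + a) * t + b * x = 0 then (σ x : ℤ) else 0) := by
        refine Finset.sum_congr rfl fun x _ => ?_
        refine Finset.sum_nbij' (fun y => (y + x + a) / 2) (fun t => 2 * t - x - a) ?_ ?_ ?_ ?_ ?_
        · intro y _; exact Finset.mem_univ _
        · intro t _; exact Finset.mem_univ _
        · intro y _; field_simp; ring
        · intro t _; field_simp; ring
        · intro y _
          have h4 : (4 : F) ≠ 0 := by
            have : (4 : F) = 2 * 2 := by norm_num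
            rw [this]; exact mul_ne_zero h2' h2'
          have expand : ((y + x + a) / 2) ^ 2 - (x + a) * ((y + x + a) / 2) + b * x =
              (y ^ 2 - ((x + a) ^ 2 - 4 * b * x)) / 4 := by
            field_simp
            ring
          refine if_congr ?_ rfl rfl
          rw [expand, div_eq_zero_iff, sub_eq_zero]
          constructor
          · intro h; exact Or.inl h
          · rintro (h | h)
            · exact h
            · exact absurd h h4
    _ = ∑ t : F, ∑ x : F, (if t ^ 2 - (x + a) * t + b * x = 0 then (σ x : ℤ) else 0) :=
        Finset.sum_comm
    _ = ∑ t : F, σ (t * (t - a) * (t - b)) := by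
        refine Finset.sum_congr rfl fun t _ => ?_
        by_cases htb : t = b
        · subst htb
          have hiff : ∀ x : F, (t ^ 2 - (x + a) * t + t * x = 0) ↔ (t ^ 2 - a * t = 0) := by
            intro x; constructor <;> intro h <;> linear_combination h
          simp only [hiff]
          have ht0 : t * (t - a) * (t - t) = 0 := by ring
          rw [ht0]
          by_cases h0 : t ^ 2 - a * t = 0
          · simp only [h0, if_true]
            rw [quadraticChar_sum_zero h2]
            simp [hσ]
          · simp only [h0, if_false]
            simp [hσ]
        · have hne : t - b ≠ 0 := sub_ne_zero_of_ne htb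
          have key : ∀ x : F, (t ^ 2 - (x + a) * t + b * x = 0) ↔ x = t * (t - a) / (t - b) := by
            intro x
            rw [eq_div_iff hne]
            constructor <;> intro h <;> linear_combination -h
          simp only [key]
          rw [Finset.sum_ite_eq' univ (t * (t - a) / (t - b)) (fun x => (σ x : ℤ))]
          simp only [Finset.mem_univ, if_true]
          have : t * (t - a) / (t - b) * (t - b) ^ 2 = t * (t - a) * (t - b) := by
            field_simp
          rw [← this, map_mul, quadraticChar_sq_one' hne, mul_one]

theorem cubic_to_cubic {F : Type*} [Field F] [Fintype F] [DecidableEq F]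
    (h2 : ringChar F ≠ 2) (h3 : ringChar F ≠ 3) (a b : F) (ha : a ≠ 0) (hb : b ≠ 0) :
    ∑ x : F, quadraticChar F x * quadraticChar F ((x + a) ^ 2 - 4 * b * x) =
      ∑ x : F, quadraticChar F x * quadraticChar F ((x + b) ^ 2 - 4 * a * x) := by
  rw [cubic_key h2 a b, cubic_key h2 b a]
  exact Finset.sum_congr rfl fun t _ => by ring_nf
end

section
/- Let f(x) = x^4 + a x^2 + b x + c be a square-free depressed quartic over F_q. Then ∑_{x ∈ F_q} σ(f(x)) = -1 + ∑_{x ∈ F_q} σ(x^3 + a x^2 - 4c x + b^2 - 4ac). -/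
open Polynomial Finset

set_option maxHeartbeats 1000000

private lemma sum_sqrt_eq' {F : Type*} [Field F] [Fintype F] [DecidableEq F]
    (hF : ringChar F ≠ 2) (t : F) :
    ∑ y : F, (if y ^ 2 = t then (1:ℤ) else 0) = quadraticChar F t + 1 := by
  have h := quadraticChar_card_sqrts hF t
  rw [Finset.sum_boole, ← h]
  congr 1
  simp [Set.toFinset_setOf]

private lemma quad_count' {F : Type*} [Field F] [Fintype F] [DecidableEq F]
    (hF : ringChar F ≠ 2) {α : F} (hα : α ≠ 0) (β γ : F) :
    ∑ x : F, (if α * x ^ 2 + β * x + γ = 0 then (1:ℤ) else 0)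
      = quadraticChar F (β ^ 2 - 4 * α * γ) + 1 := by
  have h2 : (2 : F) ≠ 0 := Ring.two_ne_zero hF
  have h4 : (4 : F) ≠ 0 := by
    intro h
    have h' : (4:F) = 2*2 := by norm_num
    rw [h'] at h
    rcases mul_eq_zero.mp h with h|h <;> exact h2 h
  have key : ∀ x : F, (α * x ^ 2 + β * x + γ = 0) ↔
      ((2*α*x + β) ^ 2 = β ^ 2 - 4 * α * γ) := by
    intro x
    constructor
    · intro h; linear_combination (4*α) * h
    · intro h
      have h' : 4*α*(α * x ^ 2 + β * x + γ) = 0 := by linear_combination h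
      rcases mul_eq_zero.mp h' with h''|h''
      · exact absurd h'' (mul_ne_zero h4 hα)
      · exact h''
  rw [← sum_sqrt_eq' hF (β ^ 2 - 4 * α * γ)]
  have h2α : (2*α : F) ≠ 0 := mul_ne_zero h2 hα
  let e : F ≃ F := (Equiv.mulLeft₀ (2*α) h2α).trans (Equiv.addRight β)
  calc ∑ x : F, (if α * x ^ 2 + β * x + γ = 0 then (1:ℤ) else 0)
      = ∑ x : F, (if (e x) ^ 2 = β ^ 2 - 4 * α * γ then (1:ℤ) else 0) := by
        apply Finset.sum_congr rfl
        intro x _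
        rw [if_congr (key x) rfl rfl]
        simp [e, Equiv.mulLeft₀]
    _ = ∑ y : F, (if y ^ 2 = β ^ 2 - 4 * α * γ then (1:ℤ) else 0) :=
        Equiv.sum_comp e (fun y => if y ^ 2 = β ^ 2 - 4 * α * γ then (1:ℤ) else 0)

theorem depressed_quartic_descent {F : Type*} [Field F] [Fintype F] [DecidableEq F]
    (h2 : ringChar F ≠ 2) (h3 : ringChar F ≠ 3) (a b c : F)
    (hsf : Squarefree (X ^ 4 + C a * X ^ 2 + C b * X + C c : F[X])) :
    ∑ x : F, quadraticChar F (x ^ 4 + a * x ^ 2 + b * x + c) =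
      -1 + ∑ x : F, quadraticChar F
        (x ^ 3 + a * x ^ 2 - 4 * c * x + (b ^ 2 - 4 * a * c)) := by
  have h2F : (2:F) ≠ 0 := Ring.two_ne_zero h2
  have h4F : (4:F) ≠ 0 := by
    intro h
    have h' : (4:F) = 2*2 := by norm_num
    rw [h'] at h
    rcases mul_eq_zero.mp h with h|h <;> exact h2F h
  -- the inner count for each u
  have inner : ∀ u : F,
      ∑ x : F, (if (2*u-a) * x ^ 2 + (-b) * x + (u^2-c) = 0 then (1:ℤ) else 0)
        = quadraticChar F (b^2 - 4*(2*u-a)*(u^2-c))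
          + (if 2*u - a = 0 then 0 else 1) := by
    intro u
    by_cases hu : 2*u - a = 0
    · rw [if_pos hu]
      have ha' : a = 2*u := by linear_combination -hu
      by_cases hb : b = 0
      · have huc : u^2 - c ≠ 0 := by
          intro h
          have hc' : c = u^2 := by linear_combination -h
          have heq : (X^2 + C u) * (X^2 + C u)
              = (X ^ 4 + C a * X ^ 2 + C b * X + C c : F[X]) := by
            rw [ha', hb, hc']
            simp only [map_mul, map_pow, map_ofNat, map_zero]
            ring
          have hdvd : (X^2 + C u) * (X^2 + C u) ∣
              (X ^ 4 + C a * X ^ 2 + C b * X + C c : F[X]) := heq ▸ dvd_rfl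
          have hunit := hsf _ hdvd
          have hdeg : ((X^2 + C u : F[X])).natDegree = 2 :=
            Polynomial.natDegree_X_pow_add_C
          have := Polynomial.natDegree_eq_zero_of_isUnit hunit
          rw [hdeg] at this
          norm_num at this
        have hnone : ∀ x : F, ¬ ((2*u-a) * x ^ 2 + (-b) * x + (u^2-c) = 0) := by
          intro x hx
          apply huc
          rw [hu, hb] at hx
          linear_combination hx
        rw [Finset.sum_congr rfl (fun x _ => if_neg (hnone x))]
        rw [hu, hb]
        simp
      · have hcond : ∀ x : F,
            ((2*u-a) * x ^ 2 + (-b) * x + (u^2-c) = 0) ↔ x = (u^2-c)/b := by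
          intro x
          rw [hu]
          constructor
          · intro h
            field_simp
            linear_combination -h
          · intro h
            subst h
            field_simp
            ring
        rw [Finset.sum_congr rfl (fun x _ => if_congr (hcond x) rfl rfl)]
        rw [Finset.sum_ite_eq' Finset.univ ((u^2-c)/b) (fun _ => (1:ℤ))]
        rw [hu]
        have e1 : b^2 - 4*(0:F)*(u^2-c) = b^2 := by ring
        rw [e1, quadraticChar_sq_one' hb]
        simp
    · rw [if_neg hu, quad_count' h2 hu (-b) (u^2-c)]
      congr 2
      ring
  -- pointwise: character value as a count of square roots
  have step1 : ∀ x : F, (quadraticChar F (x ^ 4 + a * x ^ 2 + b * x + c) : ℤ)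
      = (∑ y : F, if y ^ 2 = x ^ 4 + a * x ^ 2 + b * x + c then (1:ℤ) else 0) - 1 := by
    intro x
    rw [sum_sqrt_eq' h2]
    ring
  -- change of variable y = x^2 + u in the inner sum
  have step2 : ∀ x : F,
      (∑ y : F, if y ^ 2 = x ^ 4 + a * x ^ 2 + b * x + c then (1:ℤ) else 0)
      = ∑ u : F, (if (2*u-a) * x ^ 2 + (-b) * x + (u^2-c) = 0 then (1:ℤ) else 0) := by
    intro x
    rw [← Equiv.sum_comp (Equiv.addLeft (x^2))
      (fun y => if y ^ 2 = x ^ 4 + a * x ^ 2 + b * x + c then (1:ℤ) else 0)]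
    apply Finset.sum_congr rfl
    intro u _
    apply if_congr _ rfl rfl
    simp only [Equiv.coe_addLeft]
    constructor
    · intro h; linear_combination h
    · intro h; linear_combination h
  -- the count of the exceptional u
  have step3 : ∑ u : F, (if 2*u - a = 0 then (0:ℤ) else 1)
      = (Fintype.card F : ℤ) - 1 := by
    have hpt : ∀ u : F, (if 2*u - a = 0 then (0:ℤ) else 1)
        = 1 - (if u = a/2 then 1 else 0) := by
      intro u
      have hiff : (2*u - a = 0) ↔ (u = a/2) := by
        constructor
        · intro h
          field_simp
          linear_combination h
        · intro h
          subst h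
          field_simp
          ring
      rw [if_congr hiff rfl rfl]
      by_cases h : u = a/2 <;> simp [h]
    rw [Finset.sum_congr rfl (fun u _ => hpt u), Finset.sum_sub_distrib]
    rw [Finset.sum_ite_eq' Finset.univ (a/2) (fun _ => (1:ℤ))]
    simp [Finset.card_univ]
  -- reindex u ↦ -u/2 to obtain the resolvent cubic
  have step4 : ∑ u : F, (quadraticChar F (b^2 - 4*(2*u-a)*(u^2-c)) : ℤ)
      = ∑ x : F, quadraticChar F (x ^ 3 + a * x ^ 2 - 4 * c * x + (b ^ 2 - 4 * a * c)) := by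
    have hne : (-(2⁻¹ : F)) ≠ 0 := by
      simp [inv_ne_zero h2F]
    rw [← Equiv.sum_comp (Equiv.mulLeft₀ (-(2⁻¹ : F)) hne)
      (fun u => (quadraticChar F (b^2 - 4*(2*u-a)*(u^2-c)) : ℤ))]
    apply Finset.sum_congr rfl
    intro x _
    simp only [Equiv.mulLeft₀_apply, Equiv.coe_fn_mk]
    congr 1
    field_simp
    ring
  calc ∑ x : F, (quadraticChar F (x ^ 4 + a * x ^ 2 + b * x + c) : ℤ)
      = ∑ x : F, ((∑ u : F, (if (2*u-a) * x ^ 2 + (-b) * x + (u^2-c) = 0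
          then (1:ℤ) else 0)) - 1) := by
        apply Finset.sum_congr rfl
        intro x _
        rw [step1 x, step2 x]
    _ = (∑ x : F, ∑ u : F, (if (2*u-a) * x ^ 2 + (-b) * x + (u^2-c) = 0
          then (1:ℤ) else 0)) - Fintype.card F := by
        rw [Finset.sum_sub_distrib]
        simp [Finset.card_univ]
    _ = (∑ u : F, ∑ x : F, (if (2*u-a) * x ^ 2 + (-b) * x + (u^2-c) = 0
          then (1:ℤ) else 0)) - Fintype.card F := by
        rw [Finset.sum_comm]
    _ = (∑ u : F, ((quadraticChar F (b^2 - 4*(2*u-a)*(u^2-c)) : ℤ)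
          + (if 2*u - a = 0 then 0 else 1))) - Fintype.card F := by
        rw [Finset.sum_congr rfl (fun u _ => inner u)]
    _ = -1 + ∑ x : F, quadraticChar F
          (x ^ 3 + a * x ^ 2 - 4 * c * x + (b ^ 2 - 4 * a * c)) := by
        rw [Finset.sum_add_distrib, step3, step4]
        ring
end

section
/- Let b_1, c_1, b_2, c_2 ∈ F_q and set Δ_1 = b_1^2 - 4c_1, Δ_2 = b_2^2 - 4c_2, and B = 4(c_1 + c_2) - 2 b_1 b_2. The quartic polynomial f(x) = (x^2 + b_1 x + c_1)(x^2 + b_2 x + c_2) is square-free if and only if Δ_1 ≠ 0, Δ_2 ≠ 0, and B^2 ≠ 4 Δ_1 Δ_2. -/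
open Polynomial

private lemma quad_squarefree {F : Type*} [Field F] (h2 : (2:F) ≠ 0) (b c : F) :
    Squarefree (X ^ 2 + C b * X + C c : F[X]) ↔ b ^ 2 - 4 * c ≠ 0 := by
  constructor
  · intro hsq
    intro hΔ
    have hc : (b/2) * (b/2) = c := by
      rw [div_mul_div_comm, eq_comm, eq_div_iff (mul_ne_zero h2 h2)]
      linear_combination -hΔ
    have hb : b/2 + b/2 = b := by
      field_simp
      ring
    have e1 : (C c : F[X]) = C (b/2) * C (b/2) := by rw [← C_mul, hc]
    have e2 : (C b : F[X]) = C (b/2) + C (b/2) := by rw [← C_add, hb]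
    have key : (X ^ 2 + C b * X + C c : F[X]) = (X + C (b/2)) * (X + C (b/2)) := by
      rw [e1, e2]
      ring
    have := hsq (X + C (b/2)) (key ▸ dvd_refl _)
    have hdeg := natDegree_eq_zero_of_isUnit this
    rw [natDegree_X_add_C] at hdeg
    exact one_ne_zero hdeg
  · intro hΔ
    have hd : derivative (X ^ 2 + C b * X + C c : F[X]) = C 2 * X + C b := by
      simp [derivative_X_pow]
      rw [← C_1, ← C_add, one_add_one_eq_two]
    refine Polynomial.Separable.squarefree ?_
    refine ⟨C (-(4 * (b ^ 2 - 4 * c)⁻¹)), C ((b ^ 2 - 4 * c)⁻¹) * (C 2 * X + C b), ?_⟩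
    rw [hd]
    have h1 : (C ((b ^ 2 - 4 * c)⁻¹ * (b ^ 2 - 4 * c)) : F[X]) = 1 := by
      rw [inv_mul_cancel₀ hΔ, C_1]
    rw [← h1]
    simp only [C_mul, C_sub, C_neg, map_ofNat, map_pow]
    ring

private lemma isCoprime_C_right {F : Type*} [Field F] {a : F} (ha : a ≠ 0)
    (p : F[X]) : IsCoprime p (C a) := by
  refine ⟨0, C a⁻¹, ?_⟩
  rw [← C_mul, inv_mul_cancel₀ ha]
  simp

private lemma quad_coprime {F : Type*} [Field F] (b₁ c₁ b₂ c₂ : F) :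
    IsCoprime (X ^ 2 + C b₁ * X + C c₁ : F[X]) (X ^ 2 + C b₂ * X + C c₂) ↔
      (c₁ - c₂) ^ 2 + b₁ * (c₁ - c₂) * (b₂ - b₁) + c₁ * (b₂ - b₁) ^ 2 ≠ 0 := by
  set p : F[X] := X ^ 2 + C b₁ * X + C c₁ with hp
  by_cases hb : b₁ = b₂
  · subst hb
    by_cases hc : c₁ = c₂
    · subst hc
      apply iff_of_false
      · intro h
        have hu := isCoprime_self.mp h
        have hdeg := natDegree_eq_zero_of_isUnit hu
        have : p.natDegree = 2 := by rw [hp]; compute_degree!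
        omega
      · intro h
        apply h
        ring
    · apply iff_of_true
      · have h1 : IsCoprime p (C (c₂ - c₁)) :=
          isCoprime_C_right (sub_ne_zero_of_ne (Ne.symm hc)) p
        have h2 := h1.add_mul_left_right 1
        have h3 : (C (c₂ - c₁) + p * 1 : F[X]) = X ^ 2 + C b₁ * X + C c₂ := by
          rw [hp, C_sub]; ring
        rwa [h3] at h2
      · intro h
        have h1 : (c₁ - c₂) ^ 2 = 0 := by linear_combination h
        have h2 := pow_eq_zero_iff (n := 2) (by norm_num) |>.mp h1
        exact hc (sub_eq_zero.mp h2)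
  · have hu : b₂ - b₁ ≠ 0 := sub_ne_zero_of_ne (Ne.symm hb)
    set x₀ : F := (c₁ - c₂) / (b₂ - b₁) with hx₀
    have hCC : (C (b₂ - b₁) * C x₀ : F[X]) = C (c₁ - c₂) := by
      rw [← C_mul]
      congr 1
      rw [hx₀]
      field_simp
    have key : (X ^ 2 + C b₂ * X + C c₂ : F[X]) = p + C (b₂ - b₁) * (X - C x₀) := by
      rw [mul_sub, hCC, hp, C_sub, C_sub]
      ring
    have step1 : IsCoprime p (X ^ 2 + C b₂ * X + C c₂ : F[X]) ↔
        IsCoprime p (X - C x₀) := by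
      rw [key]
      constructor
      · intro h
        rw [show (p + C (b₂ - b₁) * (X - C x₀) : F[X]) =
          C (b₂ - b₁) * (X - C x₀) + p * 1 from by ring] at h
        exact h.of_add_mul_left_right.of_mul_right_right
      · intro h
        have h1 : IsCoprime p (C (b₂ - b₁)) := isCoprime_C_right hu p
        have h2 := (h1.mul_right h).add_mul_left_right 1
        have h3 : (C (b₂ - b₁) * (X - C x₀) + p * 1 : F[X]) =
            p + C (b₂ - b₁) * (X - C x₀) := by ring
        rwa [h3] at h2
    have step2 : IsCoprime p (X - C x₀) ↔ ¬ (X - C x₀ ∣ p) := by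
      rw [isCoprime_comm]
      exact (irreducible_X_sub_C x₀).coprime_iff_not_dvd
    have step3 : (X - C x₀ ∣ p) ↔ x₀ ^ 2 + b₁ * x₀ + c₁ = 0 := by
      rw [dvd_iff_isRoot, hp, IsRoot]
      simp
    have heval : (b₂ - b₁) ^ 2 * (x₀ ^ 2 + b₁ * x₀ + c₁) =
        (c₁ - c₂) ^ 2 + b₁ * (c₁ - c₂) * (b₂ - b₁) + c₁ * (b₂ - b₁) ^ 2 := by
      rw [hx₀]
      field_simp
    rw [step1, step2, step3]
    rw [← heval]
    constructor
    · intro h hE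
      rcases mul_eq_zero.mp hE with h' | h'
      · exact pow_ne_zero 2 hu h'
      · exact h h'
    · intro h h'
      exact h (by rw [h', mul_zero])

theorem squarefree_iff_discriminant_conditions {F : Type*} [Field F] [Fintype F]
    [DecidableEq F] (h2 : ringChar F ≠ 2) (h3 : ringChar F ≠ 3) (b₁ c₁ b₂ c₂ : F) :
    Squarefree ((X ^ 2 + C b₁ * X + C c₁) * (X ^ 2 + C b₂ * X + C c₂) : F[X]) ↔
      b₁ ^ 2 - 4 * c₁ ≠ 0 ∧ b₂ ^ 2 - 4 * c₂ ≠ 0 ∧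
        (4 * (c₁ + c₂) - 2 * b₁ * b₂) ^ 2 ≠
          4 * ((b₁ ^ 2 - 4 * c₁) * (b₂ ^ 2 - 4 * c₂)) := by
  have h2' : (2 : F) ≠ 0 := Ring.two_ne_zero h2
  have h16 : (16 : F) ≠ 0 := by
    have : (16 : F) = 2 ^ 4 := by norm_num
    rw [this]
    exact pow_ne_zero 4 h2'
  rw [squarefree_mul_iff, isRelPrime_iff_isCoprime, quad_coprime,
    quad_squarefree h2', quad_squarefree h2']
  have hE : (4 * (c₁ + c₂) - 2 * b₁ * b₂) ^ 2 - 4 * ((b₁ ^ 2 - 4 * c₁) * (b₂ ^ 2 - 4 * c₂))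
      = 16 * ((c₁ - c₂) ^ 2 + b₁ * (c₁ - c₂) * (b₂ - b₁) + c₁ * (b₂ - b₁) ^ 2) := by
    ring
  constructor
  · rintro ⟨hcop, h1, h4⟩
    refine ⟨h1, h4, ?_⟩
    intro heq
    apply hcop
    have : (16 : F) * ((c₁ - c₂) ^ 2 + b₁ * (c₁ - c₂) * (b₂ - b₁) + c₁ * (b₂ - b₁) ^ 2) = 0 := by
      rw [← hE, heq, sub_self]
    exact (mul_eq_zero.mp this).resolve_left h16
  · rintro ⟨h1, h4, hB⟩
    refine ⟨?_, h1, h4⟩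
    intro hE0
    apply hB
    have : (4 * (c₁ + c₂) - 2 * b₁ * b₂) ^ 2 -
        4 * ((b₁ ^ 2 - 4 * c₁) * (b₂ ^ 2 - 4 * c₂)) = 0 := by
      rw [hE, hE0, mul_zero]
    exact sub_eq_zero.mp this
end

section
/- Let f*(x) = (x^2 - b x + c_1)(x^2 + b x + c_2) be a square-free quartic polynomial over F_q. Set Δ_1* = b^2 - 4c_1, Δ_2* = b^2 - 4c_2, and B* = 4(c_1 + c_2) + 2b^2. Then ∑_{x ∈ F_q} σ(f*(x)) = -1 + ∑_{x ∈ F_q} σ(x(x^2 + B* x + Δ_1* Δ_2*)). -/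
open Polynomial Finset

namespace BQDaux

variable {F : Type*} [Field F] [Fintype F] [DecidableEq F]


lemma sqrts_card' (h2 : ringChar F ≠ 2) (a : F) :
    ((univ.filter fun x : F => x ^ 2 = a).card : ℤ) = quadraticChar F a + 1 := by
  rw [← quadraticChar_card_sqrts h2 a]
  congr 2
  ext x
  simp

lemma quad_roots_card (h2 : ringChar F ≠ 2) {A : F} (B C : F) (hA : A ≠ 0) :
    ((univ.filter fun x : F => A * x ^ 2 + B * x + C = 0).card : ℤ)
      = quadraticChar F (B ^ 2 - 4 * A * C) + 1 := by
  rw [← sqrts_card' h2]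
  congr 1
  have h2' : (2 : F) ≠ 0 := Ring.two_ne_zero h2
  apply Finset.card_nbij (fun x => 2 * A * x + B)
  · intro x hx
    simp only [mem_filter, mem_univ, true_and, mem_coe] at hx ⊢
    linear_combination (4 * A) * hx
  · intro x hx y hy hxy
    simp only [Set.mem_setOf_eq] at hxy
    have : 2 * A ≠ 0 := mul_ne_zero h2' hA
    field_simp at hxy
    exact mul_left_cancel₀ this (add_right_cancel hxy)
  · intro y hy
    simp only [coe_filter, mem_univ, true_and, Set.mem_setOf_eq, Set.mem_image] at hy ⊢
    refine ⟨(y - B) / (2 * A), ?_, by field_simp; ring⟩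
    field_simp
    ring_nf
    ring_nf at hy
    linear_combination hy

lemma quartic_to_cubic (h2 : ringChar F ≠ 2) (p q r : F) (hnd : ¬(q = 0 ∧ p ^ 2 = 4 * r)) :
    ∑ x : F, quadraticChar F (x ^ 4 + p * x ^ 2 + q * x + r)
      = -1 + ∑ s : F, quadraticChar F (s ^ 3 + p * s ^ 2 - 4 * r * s + (q ^ 2 - 4 * p * r)) := by
  have h2' : (2 : F) ≠ 0 := Ring.two_ne_zero h2
  set σ : F → ℤ := fun a => quadraticChar F a with hσ
  -- step 1+2: per x, 1 + σ(f x) = #{t | cond x t}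
  have step12 : ∀ x : F, (1 : ℤ) + σ (x ^ 4 + p * x ^ 2 + q * x + r)
      = ((univ.filter fun t : F =>
          (2 * t - p) * x ^ 2 + (-q) * x + (t ^ 2 - r) = 0).card : ℤ) := by
    intro x
    rw [add_comm, ← sqrts_card' h2]
    congr 1
    apply Finset.card_nbij (fun y => y - x ^ 2)
    · intro y hy
      simp only [mem_filter, mem_univ, true_and, mem_coe] at hy ⊢
      linear_combination hy
    · intro y _ z _ hyz
      simp only [Set.mem_setOf_eq] at hyz
      linear_combination hyz
    · intro t ht
      simp only [coe_filter, mem_univ, true_and, Set.mem_setOf_eq, Set.mem_image] at ht ⊢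
      exact ⟨x ^ 2 + t, by linear_combination ht, by ring⟩
  -- step 4: per t count
  have step4 : ∀ t : F, ((univ.filter fun x : F =>
        (2 * t - p) * x ^ 2 + (-q) * x + (t ^ 2 - r) = 0).card : ℤ)
      = (1 + σ (q ^ 2 - 4 * (2 * t - p) * (t ^ 2 - r))) - (if 2 * t = p then 1 else 0) := by
    intro t
    by_cases h : 2 * t - p = 0
    · have htp : 2 * t = p := by linear_combination h
      rw [if_pos htp]
      by_cases hq : q = 0
      · have hpr : p ^ 2 ≠ 4 * r := fun hc => hnd ⟨hq, hc⟩
        have htr : t ^ 2 - r ≠ 0 := by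
          intro hc
          apply hpr
          rw [← htp]
          linear_combination 4 * hc
        have : (univ.filter fun x : F =>
            (2 * t - p) * x ^ 2 + (-q) * x + (t ^ 2 - r) = 0) = ∅ := by
          apply Finset.filter_false_of_mem
          intro x _
          rw [h, hq]
          simpa using htr
        rw [this]
        have hD : q ^ 2 - 4 * (2 * t - p) * (t ^ 2 - r) = 0 := by rw [h, hq]; ring
        simp [hσ, hD]
      · have : (univ.filter fun x : F =>
            (2 * t - p) * x ^ 2 + (-q) * x + (t ^ 2 - r) = 0) = {(t ^ 2 - r) / q} := by
          ext x
          simp only [mem_filter, mem_univ, true_and, mem_singleton, h]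
          constructor
          · intro hx
            field_simp
            linear_combination -hx
          · intro hx
            rw [hx]
            field_simp
            ring
        rw [this, Finset.card_singleton]
        have hD : q ^ 2 - 4 * (2 * t - p) * (t ^ 2 - r) = q ^ 2 := by rw [h]; ring
        rw [hD]
        have : σ (q ^ 2) = 1 := quadraticChar_sq_one' hq
        rw [this]
        norm_num
    · rw [quad_roots_card h2 (-q) (t ^ 2 - r) h]
      rw [if_neg (fun hc => h (by linear_combination hc))]
      have : (-q) ^ 2 - 4 * (2 * t - p) * (t ^ 2 - r) = q ^ 2 - 4 * (2 * t - p) * (t ^ 2 - r) := by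
        ring
      rw [this]
      ring
  -- step 3: double counting
  have step3 : ∑ x : F, ((univ.filter fun t : F =>
        (2 * t - p) * x ^ 2 + (-q) * x + (t ^ 2 - r) = 0).card : ℤ)
      = ∑ t : F, ((univ.filter fun x : F =>
        (2 * t - p) * x ^ 2 + (-q) * x + (t ^ 2 - r) = 0).card : ℤ) := by
    simp_rw [Finset.card_filter]
    push_cast
    exact Finset.sum_comm
  have hite : ∑ t : F, (if 2 * t = p then (1 : ℤ) else 0) = 1 := by
    have hset : (univ.filter fun t : F => 2 * t = p) = {p / 2} := by
      ext t
      simp only [mem_filter, mem_univ, true_and, mem_singleton]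
      rw [eq_div_iff h2', mul_comm]
    rw [← Finset.sum_filter, hset, Finset.sum_singleton]
  have step7 : ∑ t : F, σ (q ^ 2 - 4 * (2 * t - p) * (t ^ 2 - r))
      = ∑ s : F, σ (s ^ 3 + p * s ^ 2 - 4 * r * s + (q ^ 2 - 4 * p * r)) := by
    have hne : (-2 : F) ≠ 0 := by
      simpa using h2'
    exact Fintype.sum_bijective (fun t : F => -2 * t) (Equiv.mulLeft₀ (-2 : F) hne).bijective
      _ _ (fun t => congrArg σ (by ring))
  have key : ∑ x : F, ((1 : ℤ) + σ (x ^ 4 + p * x ^ 2 + q * x + r))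
      = ∑ t : F, ((1 + σ (q ^ 2 - 4 * (2 * t - p) * (t ^ 2 - r)))
          - (if 2 * t = p then 1 else 0)) := by
    rw [Finset.sum_congr rfl fun x _ => step12 x, step3,
      Finset.sum_congr rfl fun t _ => step4 t]
  rw [Finset.sum_add_distrib] at key
  rw [Finset.sum_sub_distrib, Finset.sum_add_distrib, hite, step7] at key
  linarith [key]

lemma isogeny_sum (h2 : ringChar F ≠ 2) (a b : F) (hb : b ≠ 0) :
    ∑ x : F, quadraticChar F (x * (x ^ 2 + a * x + b))
      = ∑ x : F, quadraticChar F (x * (x ^ 2 - 2 * a * x + (a ^ 2 - 4 * b))) := by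
  have h2' : (2 : F) ≠ 0 := Ring.two_ne_zero h2
  set σ : F → ℤ := fun u => quadraticChar F u with hσ
  set s : Finset F := univ.filter (fun x : F => x ≠ 0) with hs
  -- Step 1
  have step1 : ∑ x : F, σ (x * (x ^ 2 + a * x + b)) = ∑ x ∈ s, σ (x + b / x + a) := by
    rw [show (univ : Finset F) = insert 0 s by
      ext x; by_cases hx : x = 0 <;> simp [hs, hx]]
    rw [Finset.sum_insert (by simp [hs])]
    have h0 : σ (0 * (0 ^ 2 + a * 0 + b)) = 0 := by
      simp [hσ]
    rw [h0, zero_add]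
    apply Finset.sum_congr rfl
    intro x hx
    rw [hs, mem_filter] at hx
    have hx0 : x ≠ 0 := hx.2
    have : x * (x ^ 2 + a * x + b) = x ^ 2 * (x + b / x + a) := by
      field_simp; ring
    rw [this, hσ]
    simp only
    rw [map_mul, quadraticChar_sq_one' hx0, one_mul]
  -- Step 2: fibering over v = x + b/x
  have step2 : ∑ x ∈ s, σ (x + b / x + a)
      = ∑ v : F, ((s.filter fun x => x + b / x = v).card : ℤ) * σ (v + a) := by
    simp_rw [Finset.card_filter]
    push_cast
    simp_rw [Finset.sum_mul, ite_mul, one_mul, zero_mul]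
    rw [Finset.sum_comm]
    apply Finset.sum_congr rfl
    intro x _
    rw [Finset.sum_ite_eq univ (x + b / x) (fun v => σ (v + a))]
    simp
  -- Step 3: fiber cardinality
  have step3 : ∀ v : F, ((s.filter fun x => x + b / x = v).card : ℤ)
      = 1 + σ (v ^ 2 - 4 * b) := by
    intro v
    have hset : (s.filter fun x => x + b / x = v)
        = univ.filter fun x : F => 1 * x ^ 2 + (-v) * x + b = 0 := by
      rw [hs, Finset.filter_filter]
      ext x
      simp only [mem_filter, mem_univ, true_and]
      constructor
      · rintro ⟨hx0, hxv⟩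
        field_simp at hxv
        linear_combination hxv
      · intro hx
        have hx0 : x ≠ 0 := by
          intro h0
          rw [h0] at hx
          apply hb
          linear_combination hx
        refine ⟨hx0, ?_⟩
        field_simp
        linear_combination hx
    rw [hset, quad_roots_card h2 (-v) b one_ne_zero]
    have : (-v) ^ 2 - 4 * 1 * b = v ^ 2 - 4 * b := by ring
    rw [this, hσ, add_comm]
  -- Combine
  rw [step1, step2]
  simp_rw [fun v => step3 v]
  simp_rw [add_mul, one_mul]
  rw [Finset.sum_add_distrib]
  have hz : ∑ v : F, σ (v + a) = 0 := by
    have := quadraticChar_sum_zero h2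
    rw [hσ]
    calc ∑ v : F, (quadraticChar F (v + a) : ℤ)
        = ∑ v : F, (quadraticChar F v : ℤ) :=
          Fintype.sum_bijective (fun v : F => v + a)
            (Equiv.addRight a).bijective _ _ (fun v => rfl)
      _ = 0 := this
  rw [hz, zero_add]
  calc ∑ v : F, σ (v ^ 2 - 4 * b) * σ (v + a)
      = ∑ w : F, σ ((w - a) ^ 2 - 4 * b) * σ w :=
        Fintype.sum_bijective (fun v : F => v + a)
          (Equiv.addRight a).bijective _ _ (fun v => by rw [add_sub_cancel_right])
    _ = ∑ w : F, σ (w * (w ^ 2 - 2 * a * w + (a ^ 2 - 4 * b))) := by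
        apply Finset.sum_congr rfl
        intro w _
        rw [hσ]
        simp only
        rw [← map_mul]
        congr 1
        ring

end BQDaux

open BQDaux in
theorem balanced_quartic_descent {F : Type*} [Field F] [Fintype F] [DecidableEq F]
    (h2 : ringChar F ≠ 2) (h3 : ringChar F ≠ 3) (b c₁ c₂ : F)
    (hsf : Squarefree ((X ^ 2 - C b * X + C c₁) * (X ^ 2 + C b * X + C c₂) : F[X])) :
    ∑ x : F, quadraticChar F ((x ^ 2 - b * x + c₁) * (x ^ 2 + b * x + c₂)) =
      -1 + ∑ x : F, quadraticChar F
        (x * (x ^ 2 + (4 * (c₁ + c₂) + 2 * b ^ 2) * x +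
          (b ^ 2 - 4 * c₁) * (b ^ 2 - 4 * c₂))) := by
  have h2' : (2 : F) ≠ 0 := Ring.two_ne_zero h2
  have hnd : ¬(b * (c₁ - c₂) = 0 ∧ (c₁ + c₂ - b ^ 2) ^ 2 = 4 * (c₁ * c₂)) := by
    rintro ⟨hq, hpr⟩
    set e : F := (c₁ + c₂ - b ^ 2) / 2 with he
    have h1 : 2 * e = c₁ + c₂ - b ^ 2 := by rw [he]; field_simp
    have h3 : c₁ * c₂ = e * e := by
      rw [he]; field_simp
      linear_combination -hpr
    have Hq : (C b : F[X]) * (C c₁ - C c₂) = 0 := by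
      have := congrArg (C : F →+* F[X]) hq
      simpa [map_mul, map_sub] using this
    have H1 : (2 : F[X]) * C e = C c₁ + C c₂ - C b ^ 2 := by
      have := congrArg (C : F →+* F[X]) h1
      simpa [map_mul, map_add, map_sub, map_pow, map_ofNat] using this
    have H3 : (C c₁ : F[X]) * C c₂ = C e * C e := by
      have := congrArg (C : F →+* F[X]) h3
      simpa [map_mul] using this
    have key : ((X ^ 2 - C b * X + C c₁) * (X ^ 2 + C b * X + C c₂) : F[X])
        = (X ^ 2 + C e) * (X ^ 2 + C e) := by
      linear_combination (X : F[X]) * Hq - X ^ 2 * H1 + H3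
    have := hsf (X ^ 2 + C e) (by rw [key])
    have hdeg := Polynomial.natDegree_eq_zero_of_isUnit this
    rw [Polynomial.natDegree_X_pow_add_C] at hdeg
    norm_num at hdeg
  -- fact (ii)
  have hD' : (c₁ - c₂) ^ 2 + 2 * b ^ 2 * (c₁ + c₂) ≠ 0 := by
    intro hD
    by_cases hb : b = 0
    · have hcc : c₁ = c₂ := by
        have : (c₁ - c₂) ^ 2 = 0 := by rw [hb] at hD; linear_combination hD
        have := pow_eq_zero_iff (n := 2) (by norm_num) |>.mp this
        linear_combination this
      have key : ((X ^ 2 - C b * X + C c₁) * (X ^ 2 + C b * X + C c₂) : F[X])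
          = (X ^ 2 + C c₂) * (X ^ 2 + C c₂) := by
        rw [hb, hcc]; simp only [map_zero]; ring
      have := hsf (X ^ 2 + C c₂) (by rw [key])
      have hdeg := Polynomial.natDegree_eq_zero_of_isUnit this
      rw [Polynomial.natDegree_X_pow_add_C] at hdeg
      norm_num at hdeg
    · set z : F := (c₁ - c₂) / (2 * b) with hz
      have hP : IsRoot (X ^ 2 - C b * X + C c₁ : F[X]) z := by
        rw [Polynomial.IsRoot.def]; simp only [eval_add, eval_sub, eval_mul, eval_pow, eval_X, eval_C]
        rw [hz]
        field_simp
        linear_combination hD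
      have hQ : IsRoot (X ^ 2 + C b * X + C c₂ : F[X]) z := by
        rw [Polynomial.IsRoot.def]; simp only [eval_add, eval_sub, eval_mul, eval_pow, eval_X, eval_C]
        rw [hz]
        field_simp
        linear_combination hD
      have hdvd := mul_dvd_mul (dvd_iff_isRoot.mpr hP) (dvd_iff_isRoot.mpr hQ)
      have := hsf (X - C z) hdvd
      exact Polynomial.not_isUnit_X_sub_C z this
  -- main chain
  have e1 : ∑ x : F, quadraticChar F ((x ^ 2 - b * x + c₁) * (x ^ 2 + b * x + c₂))
      = ∑ x : F, quadraticChar F (x ^ 4 + (c₁ + c₂ - b ^ 2) * x ^ 2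
          + (b * (c₁ - c₂)) * x + c₁ * c₂) :=
    Finset.sum_congr rfl fun x _ => congrArg (quadraticChar F) (by ring)
  have e2 := quartic_to_cubic h2 (c₁ + c₂ - b ^ 2) (b * (c₁ - c₂)) (c₁ * c₂) hnd
  have e3 : ∑ s : F, quadraticChar F (s ^ 3 + (c₁ + c₂ - b ^ 2) * s ^ 2
        - 4 * (c₁ * c₂) * s + ((b * (c₁ - c₂)) ^ 2 - 4 * (c₁ + c₂ - b ^ 2) * (c₁ * c₂)))
      = ∑ u : F, quadraticChar F (u * (u ^ 2 + (-(2 * (c₁ + c₂) + b ^ 2)) * u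
          + ((c₁ - c₂) ^ 2 + 2 * b ^ 2 * (c₁ + c₂)))) :=
    Fintype.sum_bijective (fun s : F => s + (c₁ + c₂)) (Equiv.addRight (c₁ + c₂)).bijective
      _ _ (fun s => congrArg (quadraticChar F) (by ring))
  have e4 := isogeny_sum h2 (-(2 * (c₁ + c₂) + b ^ 2))
      ((c₁ - c₂) ^ 2 + 2 * b ^ 2 * (c₁ + c₂)) hD'
  have e5 : ∑ x : F, quadraticChar F (x * (x ^ 2 - 2 * (-(2 * (c₁ + c₂) + b ^ 2)) * x
        + ((-(2 * (c₁ + c₂) + b ^ 2)) ^ 2 - 4 * ((c₁ - c₂) ^ 2 + 2 * b ^ 2 * (c₁ + c₂)))))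
      = ∑ x : F, quadraticChar F (x * (x ^ 2 + (4 * (c₁ + c₂) + 2 * b ^ 2) * x +
          (b ^ 2 - 4 * c₁) * (b ^ 2 - 4 * c₂))) :=
    Finset.sum_congr rfl fun x _ => congrArg (quadraticChar F) (by ring)
  rw [e1, e2, e3, e4, e5]
end

section
/- Let p > 3 be a prime. Then (-1/p) · ∑_{x ∈ F_p, x ≠ 0} ((x^3 + x^2 + x)/p) - ∑_{x ∈ F_p, x ≠ 0} (((x^2 + 1)(x^2 + 4x + 1))/p) = 2, where (·/p) denotes the Legendre symbol. Equivalently, ∑_{x ∈ F_p} (((x^2 + 1)(x^2 + 4x + 1))/p) = -1 + (-1/p) · ∑_{x ∈ F_p} ((x^3 + x^2 + x)/p). -/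
open Finset

namespace ZhangAux

variable {p : ℕ} [Fact p.Prime]

local notation "χ" => quadraticChar (ZMod p)

lemma card_sqrts (hp2 : ringChar (ZMod p) ≠ 2) (a : ZMod p) :
    ((univ.filter fun x : ZMod p => x ^ 2 = a).card : ℤ) = χ a + 1 := by
  have h := quadraticChar_card_sqrts hp2 a
  rw [Set.toFinset_setOf] at h
  exact_mod_cast h

lemma card_quadroots (hp2 : ringChar (ZMod p) ≠ 2) (e f : ZMod p) :
    ((univ.filter fun x : ZMod p => x ^ 2 + e * x + f = 0).card : ℤ)
      = χ (e ^ 2 - 4 * f) + 1 := by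
  rw [← card_sqrts hp2]
  have h2 : (2 : ZMod p) ≠ 0 := Ring.two_ne_zero hp2
  congr 1
  apply Finset.card_nbij' (fun x => 2 * x + e) (fun y => (y - e) / 2)
  · intro x hx
    simp only [mem_coe, mem_filter, mem_univ, true_and] at hx ⊢
    linear_combination 4 * hx
  · intro y hy
    simp only [mem_coe, mem_filter, mem_univ, true_and] at hy ⊢
    field_simp
    linear_combination hy
  · intro x _
    field_simp
    ring
  · intro y _
    field_simp
    ring


lemma sum_shift (c : ZMod p) (F : ZMod p → ℤ) :
    ∑ x : ZMod p, F (x + c) = ∑ x : ZMod p, F x :=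
  Fintype.sum_equiv (Equiv.addRight c) _ _ fun _ => rfl

lemma sum_neg (F : ZMod p → ℤ) :
    ∑ x : ZMod p, F (-x) = ∑ x : ZMod p, F x :=
  Fintype.sum_equiv (Equiv.neg _) _ _ fun _ => rfl

lemma sum_sq (hp2 : ringChar (ZMod p) ≠ 2) (G : ZMod p → ℤ) :
    ∑ x : ZMod p, G (x ^ 2) = ∑ u : ZMod p, (χ u + 1) * G u := by
  rw [← Finset.sum_fiberwise' univ (fun x : ZMod p => x ^ 2) G]
  refine Finset.sum_congr rfl fun u _ => ?_
  rw [Finset.sum_const, ← card_sqrts hp2 u]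
  push_cast
  ring

lemma sum_invsub (hp2 : ringChar (ZMod p) ≠ 2) {b : ZMod p} (hb : b ≠ 0) (G : ZMod p → ℤ) :
    ∑ x ∈ univ.filter (fun x : ZMod p => x ≠ 0), G (x + b * x⁻¹)
      = ∑ u : ZMod p, (χ (u ^ 2 - 4 * b) + 1) * G u := by
  rw [← Finset.sum_fiberwise' (univ.filter fun x : ZMod p => x ≠ 0)
    (fun x => x + b * x⁻¹) G]
  refine Finset.sum_congr rfl fun u _ => ?_
  rw [Finset.sum_const]
  have hset : (univ.filter fun x : ZMod p => x ≠ 0).filter (fun x => x + b * x⁻¹ = u)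
      = univ.filter (fun x : ZMod p => x ^ 2 + (-u) * x + b = 0) := by
    ext x
    simp only [mem_filter, mem_univ, true_and, filter_filter]
    constructor
    · rintro ⟨hx, hxe⟩
      have := mul_inv_cancel₀ hx
      linear_combination x * hxe - b * this
    · intro hx
      have hx0 : x ≠ 0 := by
        rintro rfl
        simp at hx
        exact hb (by linear_combination hx)
      refine ⟨hx0, ?_⟩
      have hinv := mul_inv_cancel₀ hx0
      field_simp
      linear_combination hx
  rw [hset]
  have hc := card_quadroots hp2 (-u) b
  have harg : (-u) ^ 2 - 4 * b = u ^ 2 - 4 * b := by ring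
  rw [harg] at hc
  rw [← hc]
  push_cast
  ring

lemma sum_chi_mul_sub (hp2 : ringChar (ZMod p) ≠ 2) {c : ZMod p} (hc : c ≠ 0) :
    ∑ u : ZMod p, (χ (u * (u - c)) : ℤ) = -1 := by
  have h0 : ∑ u : ZMod p, (χ (u * (u - c)) : ℤ)
      = ∑ u ∈ univ.filter (fun u : ZMod p => u ≠ 0), (χ (u * (u - c)) : ℤ) := by
    symm
    apply Finset.sum_subset (filter_subset _ _)
    intro u _ hu
    simp only [mem_filter, mem_univ, true_and, not_not] at hu
    simp [hu]
  rw [h0]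
  have h1 : ∑ u ∈ univ.filter (fun u : ZMod p => u ≠ 0), (χ (u * (u - c)) : ℤ)
      = ∑ v ∈ univ.filter (fun v : ZMod p => v ≠ 1), (χ v : ℤ) := by
    apply Finset.sum_nbij' (fun u => 1 - c * u⁻¹) (fun v => c * (1 - v)⁻¹)
    · intro u hu
      simp only [mem_filter, mem_univ, true_and] at hu ⊢
      intro h
      have : c * u⁻¹ = 0 := by linear_combination -h
      rcases mul_eq_zero.mp this with h' | h'
      · exact hc h'
      · exact hu (by simpa using h')
    · intro v hv
      simp only [mem_filter, mem_univ, true_and] at hv ⊢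
      exact mul_ne_zero hc (inv_ne_zero (sub_ne_zero.mpr (Ne.symm hv)))
    · intro u hu
      simp only [mem_filter, mem_univ, true_and] at hu
      have hinv := mul_inv_cancel₀ hu
      field_simp
      simp [hc]
    · intro v hv
      simp only [mem_filter, mem_univ, true_and] at hv
      have h1v : (1 : ZMod p) - v ≠ 0 := sub_ne_zero.mpr (Ne.symm hv)
      field_simp
      ring
    · intro u hu
      simp only [mem_filter, mem_univ, true_and] at hu
      have harg : u * (u - c) = u ^ 2 * (1 - c * u⁻¹) := by
        have hinv := mul_inv_cancel₀ hu
        field_simp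
      rw [harg, map_mul, quadraticChar_sq_one' hu, one_mul]
  rw [h1]
  have h2 : (univ.filter fun v : ZMod p => v ≠ 1) = univ.erase 1 := by
    ext v; simp [Finset.mem_erase, and_comm]
  rw [h2, Finset.sum_erase_eq_sub (mem_univ (1 : ZMod p))]
  have h3 : ∑ v : ZMod p, (χ v : ℤ) = 0 := quadraticChar_sum_zero hp2
  rw [h3, map_one]
  ring


lemma sum_drop_zero (F : ZMod p → ℤ) (h : F 0 = 0) :
    ∑ x : ZMod p, F x = ∑ x ∈ univ.filter (fun x : ZMod p => x ≠ 0), F x := by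
  symm
  apply Finset.sum_subset (filter_subset _ _)
  intro u _ hu
  simp only [mem_filter, mem_univ, true_and, not_not] at hu
  rw [hu, h]

lemma sum_split_zero (F : ZMod p → ℤ) :
    ∑ x : ZMod p, F x = F 0 + ∑ x ∈ univ.filter (fun x : ZMod p => x ≠ 0), F x := by
  have h : (univ.filter fun x : ZMod p => x ≠ 0) = univ.erase 0 := by
    ext v; simp [Finset.mem_erase, and_comm]
  rw [h, Finset.add_sum_erase _ F (mem_univ (0 : ZMod p))]

lemma chi_congr {a b : ZMod p} (h : a = b) : (χ a : ℤ) = χ b := by rw [h]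

lemma chi_zero : (χ (0 : ZMod p) : ℤ) = 0 := by simp

lemma main (hp2 : ringChar (ZMod p) ≠ 2) (h2 : (2:ZMod p) ≠ 0) (h4 : (4:ZMod p) ≠ 0)
    (h8 : (8:ZMod p) ≠ 0) :
    (χ (-1) : ℤ) * ∑ x ∈ univ.filter (fun x : ZMod p => x ≠ 0), (χ (x ^ 3 + x ^ 2 + x) : ℤ)
      - ∑ x ∈ univ.filter (fun x : ZMod p => x ≠ 0),
          (χ ((x ^ 2 + 1) * (x ^ 2 + 4 * x + 1)) : ℤ) = 2 := by
  have hm4 : (-4 : ZMod p) ≠ 0 := neg_ne_zero.mpr h4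
  -- Step 1: S1 = T1
  have hS1 : ∑ x ∈ univ.filter (fun x : ZMod p => x ≠ 0), (χ (x ^ 3 + x ^ 2 + x) : ℤ)
      = ∑ u : ZMod p, (χ ((u + 1) * (u ^ 2 - 4)) : ℤ) := by
    have e1 : ∑ x ∈ univ.filter (fun x : ZMod p => x ≠ 0), (χ (x ^ 3 + x ^ 2 + x) : ℤ)
        = ∑ x ∈ univ.filter (fun x : ZMod p => x ≠ 0),
            (fun u : ZMod p => (χ (u + 1) : ℤ)) (x + 1 * x⁻¹) := by
      refine Finset.sum_congr rfl fun x hx => ?_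
      simp only [mem_filter, mem_univ, true_and] at hx
      have hxx : x ^ 3 + x ^ 2 + x = x ^ 2 * ((x + 1 * x⁻¹) + 1) := by
        field_simp; ring
      simp only [hxx, map_mul, quadraticChar_sq_one' hx, one_mul]
    rw [e1, sum_invsub hp2 one_ne_zero (fun u : ZMod p => (χ (u + 1) : ℤ))]
    have e2 : ∀ u : ZMod p, ((χ (u ^ 2 - 4 * 1) : ℤ) + 1) * χ (u + 1)
        = χ ((u + 1) * (u ^ 2 - 4)) + χ (u + 1) := by
      intro u
      rw [add_mul, one_mul, ← map_mul]
      congr 2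
      ring
    rw [Finset.sum_congr rfl fun u _ => e2 u, Finset.sum_add_distrib]
    have hz : ∑ u : ZMod p, (χ (u + 1) : ℤ) = 0 :=
      (sum_shift 1 fun u => (χ u : ℤ)).trans (quadraticChar_sum_zero hp2)
    rw [hz, add_zero]
  -- Step 2: χ(-1) * T1 = A := ∑ χ(x(x+1)(x+4))
  have hT1 : (χ (-1) : ℤ) * ∑ u : ZMod p, (χ ((u + 1) * (u ^ 2 - 4)) : ℤ)
      = ∑ x : ZMod p, (χ (x * ((x + 1) * (x + 4))) : ℤ) := by
    rw [Finset.mul_sum]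
    have e1 : ∀ u : ZMod p, (χ (-1) : ℤ) * χ ((u + 1) * (u ^ 2 - 4))
        = (fun v : ZMod p => (χ ((v - 1) * (v ^ 2 - 4)) : ℤ)) (-u) := by
      intro u
      rw [← map_mul]
      exact chi_congr (by ring)
    rw [Finset.sum_congr rfl fun u _ => e1 u,
      sum_neg (fun v : ZMod p => (χ ((v - 1) * (v ^ 2 - 4)) : ℤ))]
    rw [← sum_shift 2 (fun v : ZMod p => (χ ((v - 1) * (v ^ 2 - 4)) : ℤ))]
    exact Finset.sum_congr rfl fun x _ => chi_congr (by ring)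
  -- Step 3: A = R := ∑ χ(x(x-1)(x-9))
  have hA : ∑ x : ZMod p, (χ (x * ((x + 1) * (x + 4))) : ℤ)
      = ∑ x : ZMod p, (χ (x * ((x - 1) * (x - 9))) : ℤ) := by
    rw [sum_drop_zero (fun x : ZMod p => (χ (x * ((x + 1) * (x + 4))) : ℤ)) (by simp)]
    have e1 : ∑ x ∈ univ.filter (fun x : ZMod p => x ≠ 0),
          (χ (x * ((x + 1) * (x + 4))) : ℤ)
        = ∑ x ∈ univ.filter (fun x : ZMod p => x ≠ 0),
            (fun u : ZMod p => (χ (u + 5) : ℤ)) (x + 4 * x⁻¹) := by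
      refine Finset.sum_congr rfl fun x hx => ?_
      simp only [mem_filter, mem_univ, true_and] at hx
      have hxx : x * ((x + 1) * (x + 4)) = x ^ 2 * ((x + 4 * x⁻¹) + 5) := by
        field_simp; ring
      simp only [hxx, map_mul, quadraticChar_sq_one' hx, one_mul]
    rw [e1, sum_invsub hp2 h4 (fun u : ZMod p => (χ (u + 5) : ℤ))]
    have e2 : ∀ u : ZMod p, ((χ (u ^ 2 - 4 * 4) : ℤ) + 1) * χ (u + 5)
        = χ ((u ^ 2 - 16) * (u + 5)) + χ (u + 5) := by
      intro u
      rw [add_mul, one_mul, ← map_mul]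
      congr 2
      ring
    rw [Finset.sum_congr rfl fun u _ => e2 u, Finset.sum_add_distrib]
    have hz : ∑ u : ZMod p, (χ (u + 5) : ℤ) = 0 :=
      (sum_shift 5 fun u => (χ u : ℤ)).trans (quadraticChar_sum_zero hp2)
    rw [hz, add_zero]
    rw [← sum_shift (-5) (fun v : ZMod p => (χ ((v ^ 2 - 16) * (v + 5)) : ℤ))]
    exact Finset.sum_congr rfl fun x _ => (chi_congr (by ring)).symm
  -- Step 4: S2 = Q - 1, Q := ∑ χ((u²-4) u (u+4))
  have hS2 : ∑ x ∈ univ.filter (fun x : ZMod p => x ≠ 0),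
        (χ ((x ^ 2 + 1) * (x ^ 2 + 4 * x + 1)) : ℤ)
      = ∑ u : ZMod p, (χ ((u ^ 2 - 4) * (u * (u + 4))) : ℤ) + (-1) := by
    have e1 : ∑ x ∈ univ.filter (fun x : ZMod p => x ≠ 0),
          (χ ((x ^ 2 + 1) * (x ^ 2 + 4 * x + 1)) : ℤ)
        = ∑ x ∈ univ.filter (fun x : ZMod p => x ≠ 0),
            (fun u : ZMod p => (χ (u * (u + 4)) : ℤ)) (x + 1 * x⁻¹) := by
      refine Finset.sum_congr rfl fun x hx => ?_
      simp only [mem_filter, mem_univ, true_and] at hx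
      have hxx : (x ^ 2 + 1) * (x ^ 2 + 4 * x + 1)
          = x ^ 2 * ((x + 1 * x⁻¹) * ((x + 1 * x⁻¹) + 4)) := by
        field_simp; ring
      simp only [hxx, map_mul, quadraticChar_sq_one' hx, one_mul]
    rw [e1, sum_invsub hp2 one_ne_zero (fun u : ZMod p => (χ (u * (u + 4)) : ℤ))]
    have e2 : ∀ u : ZMod p, ((χ (u ^ 2 - 4 * 1) : ℤ) + 1) * χ (u * (u + 4))
        = χ ((u ^ 2 - 4) * (u * (u + 4))) + χ (u * (u - (-4))) := by
      intro u
      rw [add_mul, one_mul, ← map_mul]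
      congr 2
      · ring
      · ring
    rw [Finset.sum_congr rfl fun u _ => e2 u, Finset.sum_add_distrib]
    rw [sum_chi_mul_sub hp2 hm4]
  -- Step 5: Q = -1 + R
  have hQ : ∑ u : ZMod p, (χ ((u ^ 2 - 4) * (u * (u + 4))) : ℤ)
      = -1 + ∑ x : ZMod p, (χ (x * ((x - 1) * (x - 9))) : ℤ) := by
    have e1 : ∑ u : ZMod p, (χ ((u ^ 2 - 4) * (u * (u + 4))) : ℤ)
        = ∑ x : ZMod p, (fun v : ZMod p => (χ ((v - 1) * (v - 9)) : ℤ)) (x ^ 2) := by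
      rw [← sum_shift (-1) (fun u : ZMod p => (χ ((u ^ 2 - 4) * (u * (u + 4))) : ℤ))]
      exact Finset.sum_congr rfl fun x _ => chi_congr (by ring)
    rw [e1, sum_sq hp2 (fun v : ZMod p => (χ ((v - 1) * (v - 9)) : ℤ))]
    have e2 : ∀ v : ZMod p, ((χ v : ℤ) + 1) * χ ((v - 1) * (v - 9))
        = χ (v * ((v - 1) * (v - 9))) + χ ((v - 1) * (v - 9)) := by
      intro v
      rw [add_mul, one_mul, ← map_mul]
    rw [Finset.sum_congr rfl fun v _ => e2 v, Finset.sum_add_distrib]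
    have hz : ∑ v : ZMod p, (χ ((v - 1) * (v - 9)) : ℤ) = -1 := by
      rw [← sum_shift 1 (fun v : ZMod p => (χ ((v - 1) * (v - 9)) : ℤ))]
      have e3 : ∑ x : ZMod p, (χ ((x + 1 - 1) * (x + 1 - 9)) : ℤ)
          = ∑ x : ZMod p, (χ (x * (x - 8)) : ℤ) :=
        Finset.sum_congr rfl fun x _ => chi_congr (by ring)
      rw [e3]
      exact sum_chi_mul_sub hp2 h8
    rw [hz]
    ring
  rw [hS1, hS2, hT1, hA, hQ]
  ring

end ZhangAux

open ZhangAux in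
theorem zhang_identity (p : ℕ) [Fact p.Prime] (hp : 3 < p) :
    (quadraticChar (ZMod p) (-1) *
        ∑ x ∈ univ.filter (fun x : ZMod p => x ≠ 0),
          quadraticChar (ZMod p) (x ^ 3 + x ^ 2 + x) -
      ∑ x ∈ univ.filter (fun x : ZMod p => x ≠ 0),
        quadraticChar (ZMod p) ((x ^ 2 + 1) * (x ^ 2 + 4 * x + 1)) = 2) ∧
    (∑ x : ZMod p, quadraticChar (ZMod p) ((x ^ 2 + 1) * (x ^ 2 + 4 * x + 1)) =
      -1 + quadraticChar (ZMod p) (-1) *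
        ∑ x : ZMod p, quadraticChar (ZMod p) (x ^ 3 + x ^ 2 + x)) := by
  have hp2 : ringChar (ZMod p) ≠ 2 := by
    rw [ZMod.ringChar_zmod_n]; omega
  have h2 : (2 : ZMod p) ≠ 0 := Ring.two_ne_zero hp2
  have h4 : (4 : ZMod p) ≠ 0 := by
    have h : (4 : ZMod p) = 2 * 2 := by norm_num
    rw [h]; exact mul_ne_zero h2 h2
  have h8 : (8 : ZMod p) ≠ 0 := by
    have h : (8 : ZMod p) = 2 * (2 * 2) := by norm_num
    rw [h]; exact mul_ne_zero h2 (mul_ne_zero h2 h2)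
  have hmain := ZhangAux.main hp2 h2 h4 h8
  refine ⟨hmain, ?_⟩
  have e1 := ZhangAux.sum_split_zero
    (fun x : ZMod p => (quadraticChar (ZMod p) ((x ^ 2 + 1) * (x ^ 2 + 4 * x + 1)) : ℤ))
  have e2 := ZhangAux.sum_split_zero
    (fun x : ZMod p => (quadraticChar (ZMod p) (x ^ 3 + x ^ 2 + x) : ℤ))
  have z1 : ((0:ZMod p) ^ 2 + 1) * ((0:ZMod p) ^ 2 + 4 * 0 + 1) = 1 := by norm_num
  have z2 : (0:ZMod p) ^ 3 + (0:ZMod p) ^ 2 + 0 = 0 := by norm_num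
  rw [e1, e2]
  simp only [z1, z2, map_one, quadraticChar_zero, zero_add]
  linarith [hmain]
end

section
/- Let p > 3 be a prime and let S = ∑_{x ∈ F_p} ((x^4 + 8x^3 + 24x^2 - 44x + 16)/p), where (·/p) denotes the Legendre symbol. If p = 19 then S = p - 1. If p ≠ 19 then S = -1 + ∑_{x ∈ F_p} ((x^3 - 608x + 5776)/p). -/
open Finset

private lemma sqrt_count {F : Type*} [Field F] [Fintype F] [DecidableEq F]
    (hF : ringChar F ≠ 2) (a : F) :
    ∑ v : F, (if v ^ 2 = a then (1 : ℤ) else 0) = quadraticChar F a + 1 := by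
  rw [← quadraticChar_card_sqrts hF a, Finset.sum_boole]
  congr 1
  rw [Set.toFinset_setOf]

private lemma quartic_to_cubic {F : Type*} [Field F] [Fintype F] [DecidableEq F]
    (hF : ringChar F ≠ 2) (c d : F) (hc : c ≠ 0) :
    ∑ x : F, quadraticChar F (x ^ 4 + c * x + d)
      = -1 + ∑ u : F, quadraticChar F (u ^ 3 - 4 * d * u + c ^ 2) := by
  have h2 : (2 : F) ≠ 0 := Ring.two_ne_zero hF
  have h4 : (4 : F) ≠ 0 := by
    have h : (4 : F) = 2 * 2 := by norm_num
    rw [h]; exact mul_ne_zero h2 h2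
  have h8 : (8 : F) ≠ 0 := by
    have h : (8 : F) = 2 * 4 := by norm_num
    rw [h]; exact mul_ne_zero h2 h4
  set g : F → F := fun w => c ^ 2 - 8 * w ^ 3 + 8 * d * w with hg
  have key : ∑ t : F, ∑ v : F, (if v ^ 2 = t ^ 4 + c * t + d then (1 : ℤ) else 0)
      = ∑ w : F, ∑ t : F, (if 2 * w * t ^ 2 - c * t + (w ^ 2 - d) = 0 then (1 : ℤ) else 0) := by
    have step : ∀ t : F, (∑ v : F, if v ^ 2 = t ^ 4 + c * t + d then (1 : ℤ) else 0)
        = ∑ w : F, (if 2 * w * t ^ 2 - c * t + (w ^ 2 - d) = 0 then (1 : ℤ) else 0) := by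
      intro t
      rw [← Equiv.sum_comp (Equiv.addRight (t ^ 2 : F))
        (fun v => if v ^ 2 = t ^ 4 + c * t + d then (1 : ℤ) else 0)]
      refine Finset.sum_congr rfl fun w _ => ?_
      refine if_congr ?_ rfl rfl
      simp only [Equiv.coe_addRight]
      constructor <;> intro h <;> linear_combination h
    rw [Finset.sum_congr rfl (fun t _ => step t), Finset.sum_comm]
  -- left side
  have E1 : ∑ t : F, ∑ v : F, (if v ^ 2 = t ^ 4 + c * t + d then (1 : ℤ) else 0)
      = (Fintype.card F : ℤ) + ∑ x : F, quadraticChar F (x ^ 4 + c * x + d) := by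
    rw [Finset.sum_congr rfl (fun t _ => sqrt_count hF (t ^ 4 + c * t + d)),
      Finset.sum_add_distrib]
    simp [Finset.card_univ, add_comm]
  -- inner sums on the right, for w ≠ 0
  have hJ : ∀ w : F, w ≠ 0 →
      ∑ t : F, (if 2 * w * t ^ 2 - c * t + (w ^ 2 - d) = 0 then (1 : ℤ) else 0)
        = quadraticChar F (g w) + 1 := by
    intro w hw
    rw [← sqrt_count hF (g w)]
    have h4w : (4 : F) * w ≠ 0 := mul_ne_zero h4 hw
    rw [← Equiv.sum_comp ((Equiv.mulLeft₀ (4 * w) h4w).trans (Equiv.addRight (-c)))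
      (fun s => if s ^ 2 = g w then (1 : ℤ) else 0)]
    refine Finset.sum_congr rfl fun t _ => ?_
    refine if_congr ?_ rfl rfl
    simp only [Equiv.trans_apply, Equiv.mulLeft₀_apply, Equiv.coe_addRight, hg]
    constructor <;> intro h
    · linear_combination 8 * w * h
    · have h0 : 8 * w * (2 * w * t ^ 2 - c * t + (w ^ 2 - d)) = 0 := by
        linear_combination h
      rcases mul_eq_zero.mp h0 with h1 | h1
      · exact absurd h1 (mul_ne_zero h8 hw)
      · exact h1
  -- inner sum at w = 0
  have hJ0 : ∑ t : F, (if 2 * (0 : F) * t ^ 2 - c * t + ((0 : F) ^ 2 - d) = 0 then (1 : ℤ) else 0)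
      = 1 := by
    have hcond : ∀ t : F,
        (2 * (0 : F) * t ^ 2 - c * t + ((0 : F) ^ 2 - d) = 0) ↔ t = -d / c := by
      intro t
      rw [eq_div_iff hc]
      constructor <;> intro h <;> linear_combination -h
    simp only [hcond]
    simp
  -- the cubic sum equals the sum of χ ∘ g
  have E3 : ∑ u : F, quadraticChar F (u ^ 3 - 4 * d * u + c ^ 2)
      = ∑ w : F, quadraticChar F (g w) := by
    have hn2 : (-2 : F) ≠ 0 := neg_ne_zero.mpr h2
    rw [← Equiv.sum_comp (Equiv.mulLeft₀ (-2 : F) hn2)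
      (fun u => quadraticChar F (u ^ 3 - 4 * d * u + c ^ 2))]
    refine Finset.sum_congr rfl fun w _ => ?_
    simp only [Equiv.mulLeft₀_apply, hg]
    congr 1
    ring
  -- assemble the right side
  have E2 : ∑ w : F, ∑ t : F, (if 2 * w * t ^ 2 - c * t + (w ^ 2 - d) = 0 then (1 : ℤ) else 0)
      = (Fintype.card F : ℤ) - 1 + ∑ w : F, quadraticChar F (g w) := by
    rw [← Finset.sum_erase_add _ _ (Finset.mem_univ (0 : F))]
    have hchi : ∑ w : F, (quadraticChar F (g w) + 1)
        = (Fintype.card F : ℤ) + ∑ w : F, quadraticChar F (g w) := by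
      rw [Finset.sum_add_distrib]; simp [Finset.card_univ, add_comm]
    have hsplit : ∑ w : F, (quadraticChar F (g w) + 1)
        = (∑ w ∈ Finset.univ.erase (0 : F), (quadraticChar F (g w) + 1))
          + (quadraticChar F (g 0) + 1) := by
      rw [Finset.sum_erase_add _ _ (Finset.mem_univ (0 : F))]
    have hg0 : quadraticChar F (g 0) = 1 := by
      have h : g 0 = c ^ 2 := by simp [hg]
      rw [h, map_pow]
      exact quadraticChar_sq_one hc
    have herase : ∑ w ∈ Finset.univ.erase (0 : F),
        (∑ t : F, (if 2 * w * t ^ 2 - c * t + (w ^ 2 - d) = 0 then (1 : ℤ) else 0))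
        = ∑ w ∈ Finset.univ.erase (0 : F), (quadraticChar F (g w) + 1) := by
      refine Finset.sum_congr rfl fun w hw => ?_
      exact hJ w (Finset.ne_of_mem_erase hw)
    rw [herase, hJ0]
    rw [hchi, hg0] at hsplit
    linarith
  rw [key, E2, ← E3] at E1
  linarith

private instance : Fact (Nat.Prime 19) := ⟨by norm_num⟩

private lemma case19 : ∑ x : ZMod 19, quadraticChar (ZMod 19)
    (x ^ 4 + 8 * x ^ 3 + 24 * x ^ 2 - 44 * x + 16) = ((19 : ℕ) : ℤ) - 1 := by decide

theorem quartic_example_evaluation (p : ℕ) [Fact p.Prime] (hp : 3 < p) :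
    (p = 19 →
      ∑ x : ZMod p, quadraticChar (ZMod p)
          (x ^ 4 + 8 * x ^ 3 + 24 * x ^ 2 - 44 * x + 16) = (p : ℤ) - 1) ∧
    (p ≠ 19 →
      ∑ x : ZMod p, quadraticChar (ZMod p)
          (x ^ 4 + 8 * x ^ 3 + 24 * x ^ 2 - 44 * x + 16) =
        -1 + ∑ x : ZMod p, quadraticChar (ZMod p) (x ^ 3 - 608 * x + 5776)) := by
  have hpp : p.Prime := Fact.out
  constructor
  · rintro rfl
    exact case19
  · intro hne
    have hF : ringChar (ZMod p) ≠ 2 := by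
      rw [ZMod.ringChar_zmod_n p]
      omega
    have hc : (-76 : ZMod p) ≠ 0 := by
      rw [neg_ne_zero]
      have h76 : ((76 : ℕ) : ZMod p) = (76 : ZMod p) := by norm_num
      rw [← h76, Ne, ZMod.natCast_eq_zero_iff]
      intro hdvd
      rw [show (76 : ℕ) = 4 * 19 from by norm_num] at hdvd
      rcases (Nat.Prime.dvd_mul hpp).mp hdvd with h | h
      · have h4 : p = 4 := by have := Nat.le_of_dvd (by norm_num) h; omega
        rw [h4] at hpp; norm_num at hpp
      · exact hne ((Nat.prime_dvd_prime_iff_eq hpp (by norm_num)).mp h)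
    have shift : ∑ x : ZMod p, quadraticChar (ZMod p)
          (x ^ 4 + 8 * x ^ 3 + 24 * x ^ 2 - 44 * x + 16)
        = ∑ x : ZMod p, quadraticChar (ZMod p) (x ^ 4 + (-76) * x + 152) := by
      rw [← Equiv.sum_comp (Equiv.addRight (-2 : ZMod p))
        (fun x => quadraticChar (ZMod p) (x ^ 4 + 8 * x ^ 3 + 24 * x ^ 2 - 44 * x + 16))]
      refine Finset.sum_congr rfl fun x _ => ?_
      simp only [Equiv.coe_addRight]
      congr 1
      ring
    rw [shift, quartic_to_cubic hF (-76) 152 hc]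
    congr 1
    refine Finset.sum_congr rfl fun u _ => ?_
    congr 1
    norm_num
end
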